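/- arXiv:1310.5469 — 8 statements merged into one kernel-verified Lean document; each statement's English description precedes it below -/
import Mathlib

section
/- Let H be a square root of a connected graph G. If u and v are distinct pendant vertices of H that are adjacent in H to the same vertex, then u and v are true twins in G, i.e., N_G[u] = N_G[v]. -/
open SimpleGraph

variable {V : Type*}

/-- The square of a graph `H`: two distinct vertices are adjacent iff
their distance in `H` is at most `2`, i.e. they are adjacent in `H` or
have a common neighbor in `H`. -/
def squareGraph (H : SimpleGraph V) : SimpleGraph V where
  Adj a b := a ≠ b ∧ (H.Adj a b ∨ ∃ w, H.Adj a w ∧ H.Adj w b)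
  symm := by
    constructor
    rintro a b ⟨hne, h | ⟨w, h1, h2⟩⟩
    · exact ⟨hne.symm, Or.inl h.symm⟩
    · exact ⟨hne.symm, Or.inr ⟨w, h2.symm, h1.symm⟩⟩
  loopless := by constructor; rintro a ⟨hne, -⟩; exact hne rfl

/-- `H` is a square root of `G` if `H² = G`. -/
def IsSquareRoot (H G : SimpleGraph V) : Prop := squareGraph H = G

/-- A pendant vertex: a vertex with exactly one neighbor (degree 1). -/
def IsPendant (H : SimpleGraph V) (u : V) : Prop := ∃! w, H.Adj u w

/-- The closed neighborhood of a vertex. -/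
def closedNbhd (G : SimpleGraph V) (u : V) : Set V := insert u (G.neighborSet u)

/-- Two vertices are true twins if their closed neighborhoods coincide. -/
def TrueTwins (G : SimpleGraph V) (u v : V) : Prop := closedNbhd G u = closedNbhd G v

/-- `S` is an `(X,Y)`-separator of `G`: every walk in `G` from a vertex of `X`
to a vertex of `Y` meets `S`, i.e. there is no path connecting `X` to `Y`
in the graph `G - S`. -/
def IsSep (G : SimpleGraph V) (S X Y : Set V) : Prop :=
  ∀ x ∈ X, ∀ y ∈ Y, ∀ p : G.Walk x y, ∃ s ∈ p.support, s ∈ S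

/-- `S` is a minimal `(X,Y)`-separator of `G`. -/
def IsMinSep (G : SimpleGraph V) (S X Y : Set V) : Prop :=
  IsSep G S X Y ∧ ∀ S' ⊂ S, ¬ IsSep G S' X Y

/-- Observation 1 ii): if `u, v` are distinct pendant vertices of a square root `H`
of a connected graph `G` that are adjacent in `H` to the same vertex `w`, then
`u` and `v` are true twins in `G`. -/
theorem pendant_same_neighbor_true_twins (G H : SimpleGraph V) (hG : G.Connected)
    (hH : IsSquareRoot H G) (u v w : V) (huv : u ≠ v)
    (hu : IsPendant H u) (hv : IsPendant H v)
    (huw : H.Adj u w) (hvw : H.Adj v w) :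
    TrueTwins G u v := by
  subst hH
  obtain ⟨wu, hwu, huniq⟩ := hu
  obtain ⟨wv, hwv, hvniq⟩ := hv
  have hwuw : w = wu := huniq w huw
  have hwvw : w = wv := hvniq w hvw
  subst hwuw
  have key : ∀ a : V, H.Adj a w → (∀ z, H.Adj a z → z = w) → closedNbhd (squareGraph H) a =
      {x | x = w ∨ H.Adj w x} := by
    intro a haw huniq'
    ext x
    simp only [closedNbhd, Set.mem_insert_iff, mem_neighborSet, Set.mem_setOf_eq,
      squareGraph] at *
    constructor
    · rintro (rfl | ⟨hne, hadj | ⟨z, h1, h2⟩⟩)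
      · exact Or.inr haw.symm
      · exact Or.inl (huniq' _ hadj)
      · have : z = w := huniq' _ h1
        subst this
        exact Or.inr h2
    · rintro (rfl | hadj)
      · exact Or.inr ⟨haw.ne, Or.inl haw⟩
      · by_cases hax : x = a
        · exact Or.inl hax
        · exact Or.inr ⟨Ne.symm hax, Or.inr ⟨w, haw, hadj⟩⟩
  unfold TrueTwins
  rw [key u huw (fun z hz => huniq z hz),
    key v hvw (fun z hz => (hvniq z hz).trans hwvw.symm)]
end

section
/- Let G be a connected graph with a square root H. Let r ≥ 3 and let {u_1, ..., u_r} be a clique in G such that {u_1, u_2} is a minimal ({u_3, ..., u_r}, V_G ∖ {u_1, ..., u_r})-separator of G. Let {x_1, ..., x_p} = N_G(u_1) ∖ {u_1, ..., u_r} with p ≥ 1. If u_1 and u_2 are true twins in G, then either u_1x_1, ..., u_1x_p ∈ E_H or u_2x_1, ..., u_2x_p ∈ E_H. Moreover, in this case G is the union of two complete graphs with vertex sets {u_1, ..., u_r} and {u_1, u_2, x_1, ..., x_p}, and the two graphs on V_G with edge sets {u_1u_2, u_1u_3, ..., u_1u_r} ∪ {u_2x_1, ..., u_2x_p} and {u_2u_1,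 u_2u_3, ..., u_2u_r} ∪ {u_1x_1, ..., u_1x_p}, respectively, are both square roots of G. -/
open SimpleGraph

variable {V : Type*}

/-- Lemma 2 ii). Here the paper's `u_1, ..., u_r` (`r ≥ 3`) is `u : Fin (r+3) → V`
and `x_1, ..., x_p` (`p ≥ 1`) is `x : Fin (p+1) → V`. -/
theorem minimal_separator_true_twins_structure {r p : ℕ}
    (G H : SimpleGraph V) (hG : G.Connected) (hH : IsSquareRoot H G)
    (u : Fin (r + 3) → V) (hu : Function.Injective u)
    (hclique : G.IsClique (Set.range u))
    (hsep : IsMinSep G {u 0, u 1} (u '' {i | 2 ≤ (i : ℕ)}) (Set.range u)ᶜ)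
    (x : Fin (p + 1) → V) (hx : Function.Injective x)
    (hxr : Set.range x = G.neighborSet (u 0) \ Set.range u)
    (htw : TrueTwins G (u 0) (u 1)) :
    ((∀ j, H.Adj (u 0) (x j)) ∨ (∀ j, H.Adj (u 1) (x j))) ∧
    -- G is the union of two complete graphs with vertex sets
    -- {u_1, ..., u_r} and {u_1, u_2, x_1, ..., x_p}:
    (∀ a b : V, G.Adj a b ↔ a ≠ b ∧
      ((a ∈ Set.range u ∧ b ∈ Set.range u) ∨
       (a ∈ insert (u 0) (insert (u 1) (Set.range x)) ∧
        b ∈ insert (u 0) (insert (u 1) (Set.range x))))) ∧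
    -- the two graphs with the indicated edge sets are square roots of G:
    IsSquareRoot (SimpleGraph.fromEdgeSet
      {e | (∃ i : Fin (r + 3), i ≠ 0 ∧ e = s(u 0, u i)) ∨ ∃ j, e = s(u 1, x j)}) G ∧
    IsSquareRoot (SimpleGraph.fromEdgeSet
      {e | (∃ i : Fin (r + 3), i ≠ 1 ∧ e = s(u 1, u i)) ∨ ∃ j, e = s(u 0, x j)}) G := by
  classical
  have hGadj : ∀ a b : V, G.Adj a b ↔ a ≠ b ∧ (H.Adj a b ∨ ∃ w, H.Adj a w ∧ H.Adj w b) := by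
    intro a b; rw [← hH]; rfl
  have hHG : ∀ {a b : V}, H.Adj a b → G.Adj a b :=
    fun h => (hGadj _ _).mpr ⟨h.ne, Or.inl h⟩
  have classify : ∀ k : Fin (r+3), k = 0 ∨ k = 1 ∨ 2 ≤ (k:ℕ) := by
    intro k
    rcases Nat.lt_or_ge (k:ℕ) 2 with h | h
    · interval_cases hk : (k:ℕ)
      · exact Or.inl (by ext; simp [hk])
      · exact Or.inr (Or.inl (by ext; simp [hk]))
    · exact Or.inr (Or.inr h)
  have hne01 : (0 : Fin (r+3)) ≠ 1 := by simp [Fin.ext_iff]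
  have hxmem : ∀ j, x j ∈ G.neighborSet (u 0) \ Set.range u := fun j => hxr ▸ ⟨j, rfl⟩
  have hx0 : ∀ j, G.Adj (u 0) (x j) := fun j => (hxmem j).1
  have hxA : ∀ j, x j ∉ Set.range u := fun j => (hxmem j).2
  have hadj01 : G.Adj (u 0) (u 1) := hclique ⟨0, rfl⟩ ⟨1, rfl⟩ (fun h => hne01 (hu h))
  have htw' : ∀ z, z ≠ u 0 → z ≠ u 1 → (G.Adj (u 0) z ↔ G.Adj (u 1) z) := by
    intro z h0 h1
    have h := Set.ext_iff.mp htw z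
    simpa [closedNbhd, SimpleGraph.mem_neighborSet, h0, h1] using h
  have hx1 : ∀ j, G.Adj (u 1) (x j) := fun j =>
    (htw' (x j) (fun h => hxA j (h ▸ ⟨0, rfl⟩)) (fun h => hxA j (h ▸ ⟨1, rfl⟩))).mp (hx0 j)
  have hA2 : ∀ (i : Fin (r+3)), 2 ≤ (i:ℕ) → ∀ z, G.Adj (u i) z → z ∈ Set.range u := by
    intro i hi z hz
    by_contra hzA
    obtain ⟨s, hs, hs01⟩ := hsep.1 (u i) ⟨i, hi, rfl⟩ z hzA hz.toWalk
    simp [SimpleGraph.Adj.toWalk, SimpleGraph.Walk.support] at hs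
    rcases hs with rfl | rfl
    · rcases hs01 with h | h
      · have := hu h; subst this; exact absurd hi (by simp)
      · have := hu h; simp [Fin.ext_iff] at this; omega
    · rcases hs01 with h | h
      · exact hzA (h ▸ ⟨0, rfl⟩)
      · exact hzA (h ▸ ⟨1, rfl⟩)
  have hN0 : ∀ z, G.Adj (u 0) z → z ∈ Set.range u ∪ Set.range x := by
    intro z hz
    by_cases hA : z ∈ Set.range u
    · exact Or.inl hA
    · exact Or.inr (hxr ▸ (⟨hz, hA⟩ : z ∈ G.neighborSet (u 0) \ Set.range u))
  have hN1 : ∀ z, G.Adj (u 1) z → z ∈ Set.range u ∪ Set.range x := by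
    intro z hz
    by_cases h0 : z = u 0
    · exact Or.inl ⟨0, h0.symm⟩
    · exact hN0 z ((htw' z h0 (fun h => G.loopless.irrefl _ (h ▸ hz))).mpr hz)
  have hH2 : ∀ (i : Fin (r+3)), 2 ≤ (i:ℕ) → ∀ z, H.Adj (u i) z → z ∈ Set.range u :=
    fun i hi z h => hA2 i hi z (hHG h)
  have i2 : Fin (r+3) := ⟨2, by omega⟩
  have hi2 : 2 ≤ ((⟨2, by omega⟩ : Fin (r+3)):ℕ) := le_refl _
  -- key symmetric lemma
  have key : ∀ a b : V,
      (∀ i : Fin (r+3), 2 ≤ (i:ℕ) → G.Adj a (u i)) →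
      (∀ j, G.Adj b (x j)) →
      (∀ z, G.Adj b z → z ∈ Set.range u ∪ Set.range x) →
      (∀ k : Fin (r+3), u k = a ∨ u k = b ∨ 2 ≤ (k:ℕ)) →
      (∃ m, H.Adj a (x m)) → ∀ j, H.Adj a (x j) := by
    intro a b hai hbx hNb hcl ⟨m, hm⟩
    -- step 1: no H-edges from a to u i, i ≥ 2
    have step1 : ∀ i : Fin (r+3), 2 ≤ (i:ℕ) → ¬ H.Adj a (u i) := by
      intro i hi hcon
      have : G.Adj (u i) (x m) :=
        (hGadj _ _).mpr ⟨fun e => hxA m ⟨i, e⟩, Or.inr ⟨a, hcon.symm, hm⟩⟩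
      exact hxA m (hA2 i hi (x m) this)
    -- step 2: H.Adj b (u i) for all i ≥ 2
    have step2 : ∀ i : Fin (r+3), 2 ≤ (i:ℕ) → H.Adj b (u i) := by
      intro i hi
      have h := (hGadj _ _).mp (hai i hi)
      rcases h.2 with h' | ⟨w, hw1, hw2⟩
      · exact absurd h' (step1 i hi)
      · obtain ⟨k, rfl⟩ := hH2 i hi w hw2.symm
        rcases hcl k with hk | hk | hk
        · exact absurd (hk ▸ hw1) (H.loopless.irrefl a)
        · exact hk ▸ hw2
        · exact absurd hw1 (step1 k hk)
    -- step 3: no H-edge from b to any x n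
    have step3 : ∀ n, ¬ H.Adj b (x n) := by
      intro n hcon
      have : G.Adj (u ⟨2, by omega⟩) (x n) :=
        (hGadj _ _).mpr ⟨fun e => hxA n ⟨_, e⟩,
          Or.inr ⟨b, (step2 _ hi2).symm, hcon⟩⟩
      exact hxA n (hA2 _ hi2 (x n) this)
    -- step 4
    intro j
    have h := (hGadj _ _).mp (hbx j)
    rcases h.2 with h' | ⟨w, hw1, hw2⟩
    · exact absurd h' (step3 j)
    · rcases hNb w (hHG hw1) with ⟨k, rfl⟩ | ⟨n, rfl⟩
      · rcases hcl k with hk | hk | hk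
        · exact hk ▸ hw2
        · exact absurd (hk ▸ hw1) (H.loopless.irrefl b)
        · exact absurd (hA2 k hk (x j) (hHG hw2)) (hxA j)
      · exact absurd hw1 (step3 n)
  have hcl01 : ∀ k : Fin (r+3), u k = u 0 ∨ u k = u 1 ∨ 2 ≤ (k:ℕ) := by
    intro k; rcases classify k with h | h | h
    · exact Or.inl (by rw [h])
    · exact Or.inr (Or.inl (by rw [h]))
    · exact Or.inr (Or.inr h)
  have hcl10 : ∀ k : Fin (r+3), u k = u 1 ∨ u k = u 0 ∨ 2 ≤ (k:ℕ) := by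
    intro k; rcases hcl01 k with h | h | h
    · exact Or.inr (Or.inl h)
    · exact Or.inl h
    · exact Or.inr (Or.inr h)
  have hai0 : ∀ i : Fin (r+3), 2 ≤ (i:ℕ) → G.Adj (u 0) (u i) := by
    intro i hi
    exact hclique ⟨0, rfl⟩ ⟨i, rfl⟩ (fun h => by have := hu h; simp [Fin.ext_iff] at this; omega)
  have hai1 : ∀ i : Fin (r+3), 2 ≤ (i:ℕ) → G.Adj (u 1) (u i) := by
    intro i hi
    exact hclique ⟨1, rfl⟩ ⟨i, rfl⟩ (fun h => by have := hu h; simp [Fin.ext_iff] at this; omega)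
  have key0 := key (u 0) (u 1) hai0 hx1 hN1 hcl01
  have key1 := key (u 1) (u 0) hai1 hx0 hN0 hcl10
  -- Part 1
  have part1 : (∀ j, H.Adj (u 0) (x j)) ∨ (∀ j, H.Adj (u 1) (x j)) := by
    have hx00 := (hGadj _ _).mp (hx0 0)
    rcases hx00.2 with h | ⟨w, hw1, hw2⟩
    · exact Or.inl (key0 ⟨0, h⟩)
    · rcases hN0 w (hHG hw1) with ⟨k, rfl⟩ | ⟨m, rfl⟩
      · rcases hcl01 k with hk | hk | hk
        · exact absurd (hk ▸ hw1) (H.loopless.irrefl (u 0))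
        · exact Or.inr (key1 ⟨0, hk ▸ hw2⟩)
        · exact absurd (hA2 k hk (x 0) (hHG hw2)) (hxA 0)
      · exact Or.inl (key0 ⟨m, hw1⟩)
  obtain ⟨t, htA, htW, htall⟩ : ∃ t, t ∈ Set.range u ∧
      (∀ z, G.Adj t z → z ∈ Set.range u ∪ Set.range x) ∧ ∀ j, H.Adj t (x j) :=
    part1.elim (fun h => ⟨u 0, ⟨0, rfl⟩, hN0, h⟩) (fun h => ⟨u 1, ⟨1, rfl⟩, hN1, h⟩)
  have hXcl : ∀ j z, H.Adj (x j) z → z ∈ Set.range u ∪ Set.range x := by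
    intro j z h
    by_cases hz : z = t
    · exact hz ▸ Or.inl htA
    · exact htW z ((hGadj _ _).mpr ⟨fun e => hz e.symm, Or.inr ⟨x j, htall j, h⟩⟩)
  have hWcl : ∀ w, w ∈ Set.range u ∪ Set.range x → ∀ z, H.Adj w z →
      z ∈ Set.range u ∪ Set.range x := by
    rintro w (⟨k, rfl⟩ | ⟨j, rfl⟩) z h
    · rcases hcl01 k with hk | hk | hk
      · exact hN0 z (hHG (hk ▸ h))
      · exact hN1 z (hHG (hk ▸ h))
      · exact Or.inl (hH2 k hk z h)
    · exact hXcl j z h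
  -- every vertex is in range u ∪ range x
  have GtoH : ∀ {a b : V}, G.Adj a b → H.Reachable a b := by
    intro a b hab
    rcases ((hGadj _ _).mp hab).2 with h | ⟨w, h1, h2⟩
    · exact h.reachable
    · exact h1.reachable.trans h2.reachable
  have GRtoHR : ∀ a b : V, G.Reachable a b → H.Reachable a b := by
    intro a b ⟨q⟩
    induction q with
    | nil => exact Reachable.refl _
    | cons h q ih => exact (GtoH h).trans ih
  have step : ∀ (a c : V) (q : H.Walk a c), a ∈ Set.range u ∪ Set.range x →
      c ∈ Set.range u ∪ Set.range x := by
    intro a c q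
    induction q with
    | nil => exact id
    | cons h q ih => intro ha; exact ih (hWcl _ ha _ h)
  have hAll : ∀ z : V, z ∈ Set.range u ∪ Set.range x := by
    intro z
    obtain ⟨q⟩ := GRtoHR (u 0) z (hG.preconnected _ _)
    exact step _ _ q (Or.inl ⟨0, rfl⟩)
  have hxx : ∀ j k, x j ≠ x k → G.Adj (x j) (x k) :=
    fun j k hne => (hGadj _ _).mpr ⟨hne, Or.inr ⟨t, (htall j).symm, htall k⟩⟩
  -- structure statement
  have hmem0 : u 0 ∈ insert (u 0) (insert (u 1) (Set.range x)) := Set.mem_insert _ _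
  have hmem1 : u 1 ∈ insert (u 0) (insert (u 1) (Set.range x)) :=
    Set.mem_insert_of_mem _ (Set.mem_insert _ _)
  have hmemx : ∀ j, x j ∈ insert (u 0) (insert (u 1) (Set.range x)) :=
    fun j => Set.mem_insert_of_mem _ (Set.mem_insert_of_mem _ ⟨j, rfl⟩)
  have hstruct : ∀ a b : V, G.Adj a b ↔ a ≠ b ∧
      ((a ∈ Set.range u ∧ b ∈ Set.range u) ∨
       (a ∈ insert (u 0) (insert (u 1) (Set.range x)) ∧
        b ∈ insert (u 0) (insert (u 1) (Set.range x)))) := by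
    intro a b
    constructor
    · intro hab
      refine ⟨hab.ne, ?_⟩
      rcases hAll a with ⟨i, rfl⟩ | ⟨j, rfl⟩ <;> rcases hAll b with ⟨k, rfl⟩ | ⟨m, rfl⟩
      · exact Or.inl ⟨⟨i, rfl⟩, ⟨k, rfl⟩⟩
      · rcases hcl01 i with hi | hi | hi
        · exact Or.inr ⟨hi ▸ hmem0, hmemx m⟩
        · exact Or.inr ⟨hi ▸ hmem1, hmemx m⟩
        · exact absurd (hA2 i hi (x m) hab) (hxA m)
      · rcases hcl01 k with hk | hk | hk
        · exact Or.inr ⟨hmemx j, hk ▸ hmem0⟩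
        · exact Or.inr ⟨hmemx j, hk ▸ hmem1⟩
        · exact absurd (hA2 k hk (x j) hab.symm) (hxA j)
      · exact Or.inr ⟨hmemx j, hmemx m⟩
    · rintro ⟨hne, ⟨ha, hb⟩ | ⟨ha, hb⟩⟩
      · exact hclique ha hb hne
      · simp only [Set.mem_insert_iff, Set.mem_range] at ha hb
        rcases ha with rfl | rfl | ⟨j, rfl⟩ <;> rcases hb with rfl | rfl | ⟨k, rfl⟩
        · exact absurd rfl hne
        · exact hadj01
        · exact hx0 k
        · exact hadj01.symm
        · exact absurd rfl hne
        · exact hx1 k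
        · exact (hx0 j).symm
        · exact (hx1 j).symm
        · exact hxx j k hne
  have sq : ∀ c d : Fin (r+3), (c = 0 ∧ d = 1) ∨ (c = 1 ∧ d = 0) →
      IsSquareRoot (SimpleGraph.fromEdgeSet
        {e | (∃ i : Fin (r + 3), i ≠ c ∧ e = s(u c, u i)) ∨ ∃ j, e = s(u d, x j)}) G := by
    intro c d hcd
    set E := SimpleGraph.fromEdgeSet
      {e | (∃ i : Fin (r + 3), i ≠ c ∧ e = s(u c, u i)) ∨ ∃ j, e = s(u d, x j)} with hEdef
    have hne_cd : c ≠ d := by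
      rcases hcd with ⟨rfl, rfl⟩ | ⟨rfl, rfl⟩ <;> simp [Fin.ext_iff]
    have hucd : u c ≠ u d := fun h => hne_cd (hu h)
    have hstruct' : ∀ a b : V, G.Adj a b ↔ a ≠ b ∧
        ((a ∈ Set.range u ∧ b ∈ Set.range u) ∨
         (a ∈ insert (u c) (insert (u d) (Set.range x)) ∧
          b ∈ insert (u c) (insert (u d) (Set.range x)))) := by
      rcases hcd with ⟨rfl, rfl⟩ | ⟨rfl, rfl⟩
      · exact hstruct
      · intro a b; rw [hstruct a b, Set.insert_comm]
    have hC : ∀ a b : V, a ≠ b →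
        a ∈ insert (u c) (insert (u d) (Set.range x)) →
        b ∈ insert (u c) (insert (u d) (Set.range x)) → G.Adj a b :=
      fun a b hne ha hb => (hstruct' a b).mpr ⟨hne, Or.inr ⟨ha, hb⟩⟩
    have memC : u c ∈ insert (u c) (insert (u d) (Set.range x)) := Set.mem_insert _ _
    have memD : u d ∈ insert (u c) (insert (u d) (Set.range x)) :=
      Set.mem_insert_of_mem _ (Set.mem_insert _ _)
    have memX : ∀ n, x n ∈ insert (u c) (insert (u d) (Set.range x)) :=
      fun n => Set.mem_insert_of_mem _ (Set.mem_insert_of_mem _ ⟨n, rfl⟩)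
    have eCA : ∀ i : Fin (r+3), i ≠ c → E.Adj (u c) (u i) := by
      intro i hi
      exact (SimpleGraph.fromEdgeSet_adj _).mpr
        ⟨Or.inl ⟨i, hi, rfl⟩, fun h => hi (hu h).symm⟩
    have eDX : ∀ j, E.Adj (u d) (x j) := by
      intro j
      exact (SimpleGraph.fromEdgeSet_adj _).mpr
        ⟨Or.inr ⟨j, rfl⟩, fun h => hxA j ⟨d, h⟩⟩
    have eCD : E.Adj (u c) (u d) := eCA d (Ne.symm hne_cd)
    have edec : ∀ z w : V, E.Adj z w →
        (∃ i : Fin (r+3), i ≠ c ∧ ((z = u c ∧ w = u i) ∨ (z = u i ∧ w = u c))) ∨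
        (∃ j, (z = u d ∧ w = x j) ∨ (z = x j ∧ w = u d)) := by
      intro z w h
      rw [SimpleGraph.fromEdgeSet_adj] at h
      obtain ⟨hm, -⟩ := h
      simpa only [Set.mem_setOf_eq, Sym2.eq_iff] using hm
    show squareGraph E = G
    have hsq : ∀ a b : V, (squareGraph E).Adj a b ↔
        a ≠ b ∧ (E.Adj a b ∨ ∃ w, E.Adj a w ∧ E.Adj w b) := fun a b => Iff.rfl
    ext a b
    rw [hsq a b]
    constructor
    · rintro ⟨hne, he | ⟨w, h1, h2⟩⟩
      · rcases edec _ _ he with ⟨i, hi, ⟨rfl, rfl⟩ | ⟨rfl, rfl⟩⟩ | ⟨j, ⟨rfl, rfl⟩ | ⟨rfl, rfl⟩⟩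
        · exact hclique ⟨_, rfl⟩ ⟨_, rfl⟩ hne
        · exact hclique ⟨_, rfl⟩ ⟨_, rfl⟩ hne
        · exact hC _ _ hne memD (memX _)
        · exact hC _ _ hne (memX _) memD
      · rcases edec _ _ h1 with ⟨i, hi, ⟨rfl, rfl⟩ | ⟨rfl, rfl⟩⟩ | ⟨j, ⟨rfl, rfl⟩ | ⟨rfl, rfl⟩⟩ <;>
          rcases edec _ _ h2 with ⟨k, hk, ⟨hw, rfl⟩ | ⟨hw, rfl⟩⟩ | ⟨n, ⟨hw, rfl⟩ | ⟨hw, rfl⟩⟩ <;>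
          first
          | exact hclique ⟨_, rfl⟩ ⟨_, rfl⟩ hne
          | exact hC _ _ hne memC (memX _)
          | exact hC _ _ hne memD (memX _)
          | exact hC _ _ hne (memX _) memC
          | exact hC _ _ hne (memX _) memD
          | exact hC _ _ hne (memX _) (memX _)
          | exact (hxA _ ⟨_, hw⟩).elim
          | exact (hxA _ ⟨_, hw.symm⟩).elim
          | exact absurd hw hucd
          | exact absurd hw.symm hucd
    · intro hab
      obtain ⟨hne, hcase⟩ := (hstruct' a b).mp hab
      refine ⟨hne, ?_⟩
      rcases hcase with ⟨⟨i, rfl⟩, ⟨k, rfl⟩⟩ | ⟨ha, hb⟩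
      · by_cases hic : i = c
        · subst hic
          exact Or.inl (eCA k (fun h => hne (congrArg u h.symm)))
        · by_cases hkc : k = c
          · subst hkc
            exact Or.inl (eCA i hic).symm
          · exact Or.inr ⟨u c, (eCA i hic).symm, eCA k hkc⟩
      · simp only [Set.mem_insert_iff, Set.mem_range] at ha hb
        rcases ha with rfl | rfl | ⟨j, rfl⟩ <;> rcases hb with rfl | rfl | ⟨n, rfl⟩
        · exact absurd rfl hne
        · exact Or.inl eCD
        · exact Or.inr ⟨u d, eCD, eDX n⟩
        · exact Or.inl eCD.symm
        · exact absurd rfl hne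
        · exact Or.inl (eDX n)
        · exact Or.inr ⟨u d, (eDX j).symm, eCD.symm⟩
        · exact Or.inl ((eDX j).symm)
        · exact Or.inr ⟨u d, (eDX j).symm, eDX n⟩
  exact ⟨part1, hstruct, sq 0 1 (Or.inl ⟨rfl, rfl⟩), sq 1 0 (Or.inr ⟨rfl, rfl⟩)⟩
end

section
/- Let G be a connected graph with a square root H. Let r ≥ 3 and let {u_1, ..., u_r} be a clique in G such that {u_1, u_2} is a minimal ({u_3, ..., u_r}, V_G ∖ {u_1, ..., u_r})-separator of G. Let {x_1, ..., x_p} = N_G(u_1) ∖ {u_1, ..., u_r} with p ≥ 1. If N_G[u_2] ∖ N_G[u_1] is nonempty, then u_2u_1, u_3u_1, ..., u_ru_1 ∈ E_H, u_3u_2, ..., u_ru_2 ∉ E_H, and u_1x_1, ..., u_1x_p ∉ E_H. Moreover, the graph H' obtained from H by deleting all edges u_iu_j with 3 ≤ i < j ≤ r is a square root of G, and in H' the set {u_1, ..., u_r} induces a star with central vertex u_1 whose leaves u_3, ..., u_r are pendant vertices of H'. -/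
open SimpleGraph

variable {V : Type*}

private lemma squareGraph_adj (H : SimpleGraph V) (a b : V) :
    (squareGraph H).Adj a b ↔ a ≠ b ∧ (H.Adj a b ∨ ∃ w, H.Adj a w ∧ H.Adj w b) := Iff.rfl

/-- Lemma 2 iii). Here the paper's `u_1, ..., u_r` (`r ≥ 3`) is `u : Fin (r+3) → V`
and `x_1, ..., x_p` (`p ≥ 1`) is `x : Fin (p+1) → V`. -/
theorem minimal_separator_unbalanced_structure {r p : ℕ}
    (G H : SimpleGraph V) (hG : G.Connected) (hH : IsSquareRoot H G)
    (u : Fin (r + 3) → V) (hu : Function.Injective u)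
    (hclique : G.IsClique (Set.range u))
    (hsep : IsMinSep G {u 0, u 1} (u '' {i | 2 ≤ (i : ℕ)}) (Set.range u)ᶜ)
    (x : Fin (p + 1) → V) (hx : Function.Injective x)
    (hxr : Set.range x = G.neighborSet (u 0) \ Set.range u)
    -- N_G[u_2] ∖ N_G[u_1] ≠ ∅:
    (hdiff : (closedNbhd G (u 1) \ closedNbhd G (u 0)).Nonempty) :
    (∀ i : Fin (r + 3), i ≠ 0 → H.Adj (u i) (u 0)) ∧
    (∀ i : Fin (r + 3), 2 ≤ (i : ℕ) → ¬ H.Adj (u i) (u 1)) ∧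
    (∀ j, ¬ H.Adj (u 0) (x j)) ∧
    -- deleting all edges u_iu_j with 3 ≤ i < j ≤ r from H gives a square root H'
    -- of G in which {u_1, ..., u_r} induces a star with central vertex u_1 and
    -- whose leaves u_3, ..., u_r are pendant vertices:
    (IsSquareRoot (H.deleteEdges
        {e | ∃ i j : Fin (r + 3), 2 ≤ (i : ℕ) ∧ 2 ≤ (j : ℕ) ∧ i ≠ j ∧ e = s(u i, u j)}) G ∧
     (∀ i : Fin (r + 3), i ≠ 0 → (H.deleteEdges
        {e | ∃ i j : Fin (r + 3), 2 ≤ (i : ℕ) ∧ 2 ≤ (j : ℕ) ∧ i ≠ j ∧ e = s(u i, u j)}).Adj (u 0) (u i)) ∧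
     (∀ i j : Fin (r + 3), (H.deleteEdges
        {e | ∃ i j : Fin (r + 3), 2 ≤ (i : ℕ) ∧ 2 ≤ (j : ℕ) ∧ i ≠ j ∧ e = s(u i, u j)}).Adj (u i) (u j) → i = 0 ∨ j = 0) ∧
     (∀ i : Fin (r + 3), 2 ≤ (i : ℕ) → IsPendant (H.deleteEdges
        {e | ∃ i j : Fin (r + 3), 2 ≤ (i : ℕ) ∧ 2 ≤ (j : ℕ) ∧ i ≠ j ∧ e = s(u i, u j)}) (u i))) := by
  classical
  rw [IsSquareRoot] at hH
  subst hH
  set D : Set (Sym2 V) :=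
    {e | ∃ i j : Fin (r + 3), 2 ≤ (i : ℕ) ∧ 2 ≤ (j : ℕ) ∧ i ≠ j ∧ e = s(u i, u j)} with hD
  -- basic Fin facts
  have hcase : ∀ i : Fin (r + 3), i = 0 ∨ i = 1 ∨ 2 ≤ (i : ℕ) := by
    intro i
    by_cases h0 : (i : ℕ) = 0
    · exact Or.inl (Fin.ext (by simp [h0]))
    · by_cases h1 : (i : ℕ) = 1
      · exact Or.inr (Or.inl (Fin.ext (by simp [h1])))
      · exact Or.inr (Or.inr (by omega))
  have hne0 : ∀ i : Fin (r + 3), 2 ≤ (i : ℕ) → i ≠ 0 := by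
    intro i hi h; rw [h] at hi; simp at hi
  have hne1 : ∀ i : Fin (r + 3), 2 ≤ (i : ℕ) → i ≠ 1 := by
    intro i hi h; rw [h] at hi; simp at hi
  have h01 : (0 : Fin (r + 3)) ≠ 1 := by simp [Fin.ext_iff]
  have hGadj : ∀ i j : Fin (r + 3), i ≠ j → (squareGraph H).Adj (u i) (u j) := by
    intro i j h
    exact hclique ⟨i, rfl⟩ ⟨j, rfl⟩ (fun e => h (hu e))
  -- Claim (b): neighbors of u i (i ≥ 2) are inside the clique
  have hb : ∀ i : Fin (r + 3), 2 ≤ (i : ℕ) → ∀ y, (squareGraph H).Adj (u i) y →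
      y ∈ Set.range u := by
    intro i hi y hadj
    by_contra hy
    obtain ⟨s, hs, hsS⟩ := hsep.1 (u i) ⟨i, hi, rfl⟩ y hy hadj.toWalk
    simp [SimpleGraph.Adj.toWalk] at hs
    rcases hsS with h | h
    · rcases hs with rfl | rfl
      · exact hne0 i hi (hu h)
      · exact hy ⟨0, h.symm⟩
    · rcases hs with rfl | rfl
      · exact hne1 i hi (hu h)
      · exact hy ⟨1, h.symm⟩
  have hbH : ∀ i : Fin (r + 3), 2 ≤ (i : ℕ) → ∀ y, H.Adj (u i) y → y ∈ Set.range u := by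
    intro i hi y h
    exact hb i hi y ⟨h.ne, Or.inl h⟩
  -- the witness w ∈ N[u 1] \ N[u 0]
  obtain ⟨w, hw1, hw0⟩ := hdiff
  simp only [closedNbhd, Set.mem_insert_iff, mem_neighborSet] at hw1 hw0
  push_neg at hw0
  obtain ⟨hw_ne0, hw_nadj0⟩ := hw0
  have hw_adj1 : (squareGraph H).Adj (u 1) w := by
    rcases hw1 with rfl | h
    · exact absurd (hGadj 0 1 h01) hw_nadj0
    · exact h
  have hw_nr : w ∉ Set.range u := by
    rintro ⟨k, rfl⟩
    rcases eq_or_ne k 0 with rfl | hk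
    · exact hw_ne0 rfl
    · exact hw_nadj0 (hGadj 0 k (Ne.symm hk))
  -- Step 3: no H-edge from u i (i ≥ 2) to u 1
  have step3 : ∀ i : Fin (r + 3), 2 ≤ (i : ℕ) → ¬ H.Adj (u i) (u 1) := by
    intro i hi hadj
    obtain ⟨hne1w, h | ⟨z, hz1, hzw⟩⟩ := hw_adj1
    · exact hw_nr (hb i hi w ⟨fun e => hw_nr ⟨i, e⟩, Or.inr ⟨u 1, hadj, h⟩⟩)
    · by_cases hzi : z = u i
      · exact hw_nr (hbH i hi w (hzi ▸ hzw))
      · have hzr : z ∈ Set.range u :=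
          hb i hi z ⟨fun e => hzi e.symm, Or.inr ⟨u 1, hadj, hz1⟩⟩
        obtain ⟨k, rfl⟩ := hzr
        rcases hcase k with rfl | rfl | hk
        · exact hw_nadj0 ⟨hw_ne0 ∘ Eq.symm, Or.inl hzw⟩
        · exact hz1.ne rfl
        · exact hw_nr (hbH k hk w hzw)
  -- Step 4: H-edges u i — u 0 and u 0 — u 1
  have step4 : ∀ i : Fin (r + 3), 2 ≤ (i : ℕ) → H.Adj (u i) (u 0) ∧ H.Adj (u 0) (u 1) := by
    intro i hi
    obtain ⟨_, h | ⟨z, hz1, hz2⟩⟩ := hGadj i 1 (hne1 i hi)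
    · exact absurd h (step3 i hi)
    · obtain ⟨k, rfl⟩ := hbH i hi z hz1
      rcases hcase k with rfl | rfl | hk
      · exact ⟨hz1, hz2⟩
      · exact absurd rfl hz2.ne
      · exact absurd hz2 (step3 k hk)
  have i₂ : Fin (r + 3) := ⟨2, by omega⟩
  have hi₂ : 2 ≤ ((⟨2, by omega⟩ : Fin (r + 3)) : ℕ) := le_refl 2
  have hH01 : H.Adj (u 0) (u 1) := (step4 ⟨2, by omega⟩ hi₂).2
  have step4' : ∀ i : Fin (r + 3), 2 ≤ (i : ℕ) → H.Adj (u i) (u 0) :=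
    fun i hi => (step4 i hi).1
  -- Step 5: no H-edge u 0 — x j
  have step5 : ∀ j, ¬ H.Adj (u 0) (x j) := by
    intro j hadj
    have hxj : x j ∈ (squareGraph H).neighborSet (u 0) \ Set.range u := by
      rw [← hxr]; exact ⟨j, rfl⟩
    have hni : u (⟨2, by omega⟩ : Fin (r + 3)) ≠ x j := fun h => hxj.2 ⟨_, h⟩
    exact hxj.2 (hb ⟨2, by omega⟩ hi₂ (x j)
      ⟨hni, Or.inr ⟨u 0, step4' ⟨2, by omega⟩ hi₂, hadj⟩⟩)
  -- first bullet
  have bullet1 : ∀ i : Fin (r + 3), i ≠ 0 → H.Adj (u i) (u 0) := by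
    intro i hi0
    rcases hcase i with rfl | rfl | hi
    · exact absurd rfl hi0
    · exact hH01.symm
    · exact step4' i hi
  -- facts about D
  have hDmem : ∀ a b : V, s(a, b) ∈ D →
      ∃ i j : Fin (r + 3), 2 ≤ (i : ℕ) ∧ 2 ≤ (j : ℕ) ∧ a = u i ∧ b = u j := by
    intro a b h
    obtain ⟨i, j, hi, hj, hij, heq⟩ := h
    rw [Sym2.eq_iff] at heq
    rcases heq with ⟨ha, hb⟩ | ⟨ha, hb⟩
    · exact ⟨i, j, hi, hj, ha, hb⟩
    · exact ⟨j, i, hj, hi, ha, hb⟩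
  have hDnot : ∀ a : V, s(u 0, a) ∉ D := by
    intro a h
    obtain ⟨i, j, hi, hj, h1, h2⟩ := hDmem _ _ h
    exact hne0 i hi (hu h1).symm
  have hDnot' : ∀ a : V, s(a, u 0) ∉ D := by
    intro a h
    exact hDnot a (Sym2.eq_swap ▸ h)
  have hH'iff : ∀ a b : V, (H.deleteEdges D).Adj a b ↔ H.Adj a b ∧ s(a, b) ∉ D := by
    intro a b
    simp [SimpleGraph.deleteEdges_adj]
  have hA0 : ∀ i : Fin (r + 3), i ≠ 0 → (H.deleteEdges D).Adj (u 0) (u i) := by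
    intro i hi0
    rw [hH'iff]
    exact ⟨(bullet1 i hi0).symm, hDnot _⟩
  -- square root property
  have hsqr : squareGraph (H.deleteEdges D) = squareGraph H := by
    ext a b
    simp only [squareGraph_adj]
    constructor
    · rintro ⟨hab, h | ⟨z, h1, h2⟩⟩
      · exact ⟨hab, Or.inl ((hH'iff a b).mp h).1⟩
      · exact ⟨hab, Or.inr ⟨z, ((hH'iff a z).mp h1).1, ((hH'iff z b).mp h2).1⟩⟩
    · rintro ⟨hab, h | ⟨z, h1, h2⟩⟩
      · by_cases hm : s(a, b) ∈ D
        · obtain ⟨i, j, hi, hj, rfl, rfl⟩ := hDmem _ _ hm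
          exact ⟨hab, Or.inr ⟨u 0, (hA0 i (hne0 i hi)).symm, hA0 j (hne0 j hj)⟩⟩
        · exact ⟨hab, Or.inl ((hH'iff a b).mpr ⟨h, hm⟩)⟩
      · by_cases hm1 : s(a, z) ∈ D
        · obtain ⟨i, j, hi, hj, rfl, rfl⟩ := hDmem _ _ hm1
          obtain ⟨k, rfl⟩ := hbH j hj b h2
          rcases hcase k with rfl | rfl | hk
          · exact ⟨hab, Or.inl (hA0 i (hne0 i hi)).symm⟩
          · exact absurd h2 (step3 j hj)
          · exact ⟨hab, Or.inr ⟨u 0, (hA0 i (hne0 i hi)).symm, hA0 k (hne0 k hk)⟩⟩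
        · by_cases hm2 : s(z, b) ∈ D
          · obtain ⟨i, j, hi, hj, rfl, rfl⟩ := hDmem _ _ hm2
            obtain ⟨k, rfl⟩ := hbH i hi a h1.symm
            rcases hcase k with rfl | rfl | hk
            · exact ⟨hab, Or.inl (hA0 j (hne0 j hj))⟩
            · exact absurd h1.symm (step3 i hi)
            · exact ⟨hab, Or.inr ⟨u 0, (hA0 k (hne0 k hk)).symm, hA0 j (hne0 j hj)⟩⟩
          · exact ⟨hab, Or.inr ⟨z, (hH'iff a z).mpr ⟨h1, hm1⟩, (hH'iff z b).mpr ⟨h2, hm2⟩⟩⟩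
  -- star structure
  have hstar : ∀ i j : Fin (r + 3), (H.deleteEdges D).Adj (u i) (u j) → i = 0 ∨ j = 0 := by
    intro i j hadj
    rw [hH'iff] at hadj
    obtain ⟨hHadj, hDadj⟩ := hadj
    by_contra hcon
    push_neg at hcon
    obtain ⟨hi0, hj0⟩ := hcon
    rcases hcase i with rfl | rfl | hi
    · exact hi0 rfl
    · rcases hcase j with rfl | rfl | hj
      · exact hj0 rfl
      · exact hHadj.ne rfl
      · exact step3 j hj hHadj.symm
    · rcases hcase j with rfl | rfl | hj
      · exact hj0 rfl
      · exact step3 i hi hHadj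
      · exact hDadj ⟨i, j, hi, hj, fun h => hHadj.ne (congrArg u h), rfl⟩
  have hpend : ∀ i : Fin (r + 3), 2 ≤ (i : ℕ) → IsPendant (H.deleteEdges D) (u i) := by
    intro i hi
    refine ⟨u 0, (hA0 i (hne0 i hi)).symm, ?_⟩
    intro y hy
    rw [hH'iff] at hy
    obtain ⟨hyH, hyD⟩ := hy
    obtain ⟨k, rfl⟩ := hbH i hi y hyH
    rcases hcase k with rfl | rfl | hk
    · rfl
    · exact absurd hyH (step3 i hi)
    · exact absurd ⟨i, k, hi, hk, fun h => hyH.ne (congrArg u h), rfl⟩ hyD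
  exact ⟨bullet1, step3, step5, hsqr, hA0, hstar, hpend⟩
end

section
/- Let G be a connected F-graph, i.e., G contains p + q + r distinct vertices u_1, ..., u_r, x_1, ..., x_p, y_1, ..., y_q (with r ≥ 3, p ≥ 1, q ≥ 1) such that: (i) {u_1, ..., u_r} is a clique in G; (ii) if r ≥ 4 then {u_1, u_2, u_3} is a minimal ({u_4, ..., u_r}, V_G ∖ {u_1, ..., u_r})-separator of G; (iii) N_G(u_2) = {u_1, u_3, ..., u_r} ∪ {x_1, ..., x_p} ∪ {y_1, ..., y_q}; (iv) N_G(u_1) ∩ N_G(u_3) = {u_2, u_4, ..., u_r}; (v) {x_1, ..., x_p} ⊆ N_G(u_1) and {y_1, ..., y_q} ⊆ N_G(u_3); (vi) x_iy_j ∉ E_G for all i, j. If H is a square root of G, then the edges u_1u_2, u_2u_3, u_2u_4, ..., u_2u_r, u_1x_1, ..., u_1x_p, u_3y_1, ..., u_3y_q all belong to H, d_H(u_2) = r − 1, N_H(u_1) ∖ {u_2} = {x_1, ..., x_p}, and N_H(u_3) ∖ {u_2} = {y_1, ..., y_q}. -/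
open SimpleGraph

variable {V : Type*}

/-- `G` is an F-graph with F-triple `u 0, u 1, u 2`, remaining clique vertices
`u i` for `3 ≤ i`, and attachment vertices `x j` (neighbors of `u 0`) and
`y j` (neighbors of `u 2`). Here the paper's `u_1,...,u_r` is `u : Fin (r+3) → V`
(so `r ≥ 3`), `x_1,...,x_p` is `x : Fin (p+1) → V` (so `p ≥ 1`) and
`y_1,...,y_q` is `y : Fin (q+1) → V` (so `q ≥ 1`). -/
def IsFGraph {r p q : ℕ} (G : SimpleGraph V) (u : Fin (r + 3) → V)
    (x : Fin (p + 1) → V) (y : Fin (q + 1) → V) : Prop :=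
  -- (i) {u_1, ..., u_r} is a clique in G
  G.IsClique (Set.range u) ∧
  -- (ii) if r ≥ 4 then {u_1,u_2,u_3} is a minimal ({u_4,...,u_r}, V ∖ {u_1,...,u_r})-separator
  (4 ≤ r + 3 → IsMinSep G {u 0, u 1, u 2} (u '' {i | 3 ≤ (i : ℕ)}) (Set.range u)ᶜ) ∧
  -- (iii) N_G(u_2) = {u_1, u_3, ..., u_r} ∪ {x_1,...,x_p} ∪ {y_1,...,y_q}
  G.neighborSet (u 1) = (u '' {i | i ≠ 1}) ∪ Set.range x ∪ Set.range y ∧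
  -- (iv) N_G(u_1) ∩ N_G(u_3) = {u_2, u_4, ..., u_r}
  G.neighborSet (u 0) ∩ G.neighborSet (u 2) = u '' {i | i = 1 ∨ 3 ≤ (i : ℕ)} ∧
  -- (v)
  Set.range x ⊆ G.neighborSet (u 0) ∧
  Set.range y ⊆ G.neighborSet (u 2) ∧
  -- (vi)
  ∀ j k, ¬ G.Adj (x j) (y k)

/-- Lemma 4, first part. Here the paper's `u_1, ..., u_r` (`r ≥ 3`) is
`u : Fin (r+3) → V`, `x_1, ..., x_p` (`p ≥ 1`) is `x : Fin (p+1) → V`, and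
`y_1, ..., y_q` (`q ≥ 1`) is `y : Fin (q+1) → V`; all these vertices are distinct. -/
theorem root_of_FGraph_structure {r p q : ℕ}
    (G H : SimpleGraph V) (hG : G.Connected)
    (u : Fin (r + 3) → V) (x : Fin (p + 1) → V) (y : Fin (q + 1) → V)
    (hu : Function.Injective u) (hx : Function.Injective x) (hy : Function.Injective y)
    (hux : ∀ i j, u i ≠ x j) (huy : ∀ i j, u i ≠ y j) (hxy : ∀ i j, x i ≠ y j)
    (hF : IsFGraph G u x y)
    (hH : IsSquareRoot H G) :
    H.Adj (u 0) (u 1) ∧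
    (∀ i : Fin (r + 3), 2 ≤ (i : ℕ) → H.Adj (u 1) (u i)) ∧
    (∀ j, H.Adj (u 0) (x j)) ∧
    (∀ j, H.Adj (u 2) (y j)) ∧
    (H.neighborSet (u 1)).ncard = r + 2 ∧
    H.neighborSet (u 0) \ {u 1} = Set.range x ∧
    H.neighborSet (u 2) \ {u 1} = Set.range y := by
  obtain ⟨hclq, hsep, hNb, hNac, hxa, hya, hnxy⟩ := hF
  have hiff : ∀ v w : V, G.Adj v w ↔ v ≠ w ∧ (H.Adj v w ∨ ∃ z, H.Adj v z ∧ H.Adj z w) := by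
    intro v w
    rw [← hH]
    exact Iff.rfl
  have hHG : ∀ {v w : V}, H.Adj v w → G.Adj v w := fun h => (hiff _ _).2 ⟨h.ne, Or.inl h⟩
  have hcn : ∀ {z v w : V}, H.Adj z v → H.Adj z w → v ≠ w → G.Adj v w :=
    fun h1 h2 hne => (hiff _ _).2 ⟨hne, Or.inr ⟨_, h1.symm, h2⟩⟩
  -- Fin value facts
  have hv0 : ((0 : Fin (r+3)) : ℕ) = 0 := rfl
  have hv1 : ((1 : Fin (r+3)) : ℕ) = 1 := by
    simp [Fin.val_one]
  have hv2 : ((2 : Fin (r+3)) : ℕ) = 2 := by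
    simp [Fin.val_two]
  have hvne : ∀ {i j : Fin (r+3)}, (i:ℕ) ≠ (j:ℕ) → u i ≠ u j :=
    fun h he => h (congrArg Fin.val (hu he))
  have hfx : ∀ {i : Fin (r+3)} {n : ℕ}, (i:ℕ) = n → ∀ (j : Fin (r+3)), (j:ℕ) = n → i = j :=
    fun h1 j h2 => Fin.ext (h1.trans h2.symm)
  have hmemx : ∀ j, x j ∉ Set.range u := by rintro j ⟨i, hi⟩; exact hux i j hi
  have hmemy : ∀ k, y k ∉ Set.range u := by rintro k ⟨i, hi⟩; exact huy i k hi
  -- S1 : vertices u i, i ≥ 3, have no G-neighbor outside range u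
  have S1 : ∀ i : Fin (r+3), 3 ≤ (i:ℕ) → ∀ v, v ∉ Set.range u → ¬ G.Adj (u i) v := by
    intro i hi v hv hadj
    have h4 : 4 ≤ r + 3 := by have := i.isLt; omega
    obtain ⟨hsep', -⟩ := hsep h4
    obtain ⟨s, hs, hsS⟩ := hsep' (u i) ⟨i, hi, rfl⟩ v hv (SimpleGraph.Walk.cons hadj SimpleGraph.Walk.nil)
    simp only [SimpleGraph.Walk.support_cons, SimpleGraph.Walk.support_nil,
      List.mem_cons, List.mem_singleton, List.not_mem_nil, or_false] at hs
    have hsS' : s = u 0 ∨ s = u 1 ∨ s = u 2 := by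
      simpa [Set.mem_insert_iff] using hsS
    rcases hs with rfl | rfl
    · rcases hsS' with h | h | h
      · exact hvne (by rw [hv0]; omega) h
      · exact hvne (by rw [hv1]; omega) h
      · exact hvne (by rw [hv2]; omega) h
    · rcases hsS' with h | h | h <;> exact hv ⟨_, h.symm⟩
  -- basic G-adjacencies
  have hGu : ∀ i j : Fin (r+3), i ≠ j → G.Adj (u i) (u j) :=
    fun i j h => hclq (Set.mem_range_self i) (Set.mem_range_self j) (fun e => h (hu e))
  have hGux : ∀ j, G.Adj (u 1) (x j) := by
    intro j
    have hmem : x j ∈ (u '' {i | i ≠ 1}) ∪ Set.range x ∪ Set.range y :=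
      Or.inl (Or.inr ⟨j, rfl⟩)
    rw [← hNb] at hmem
    exact hmem
  have hGuy : ∀ k, G.Adj (u 1) (y k) := by
    intro k
    have hmem : y k ∈ (u '' {i | i ≠ 1}) ∪ Set.range x ∪ Set.range y :=
      Or.inr ⟨k, rfl⟩
    rw [← hNb] at hmem
    exact hmem
  have hxnc : ∀ j, ¬ G.Adj (u 2) (x j) := by
    intro j h
    have hmem : x j ∈ G.neighborSet (u 0) ∩ G.neighborSet (u 2) :=
      ⟨hxa ⟨j, rfl⟩, h⟩
    rw [hNac] at hmem
    obtain ⟨i, -, hi⟩ := hmem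
    exact hux i j hi
  have hyna : ∀ k, ¬ G.Adj (u 0) (y k) := by
    intro k h
    have hmem : y k ∈ G.neighborSet (u 0) ∩ G.neighborSet (u 2) :=
      ⟨h, hya ⟨k, rfl⟩⟩
    rw [hNac] at hmem
    obtain ⟨i, -, hi⟩ := hmem
    exact huy i k hi
  -- membership in N_G(u 1)
  have hNbmem : ∀ v, G.Adj (u 1) v →
      (∃ i : Fin (r+3), i ≠ 1 ∧ v = u i) ∨ (∃ j, v = x j) ∨ (∃ k, v = y k) := by
    intro v h
    have hmem : v ∈ G.neighborSet (u 1) := h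
    rw [hNb] at hmem
    rcases hmem with (⟨i, hi, hv⟩ | ⟨j, hv⟩) | ⟨k, hv⟩
    · exact Or.inl ⟨i, hi, hv.symm⟩
    · exact Or.inr (Or.inl ⟨j, hv.symm⟩)
    · exact Or.inr (Or.inr ⟨k, hv.symm⟩)
  -- case split on i ≠ 1
  have hcases : ∀ i : Fin (r+3), i ≠ 1 → (i:ℕ) = 0 ∨ (i:ℕ) = 2 ∨ 3 ≤ (i:ℕ) := by
    intro i hi
    have : (i:ℕ) ≠ 1 := fun h => hi (Fin.ext (h.trans hv1.symm))
    omega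
  -- Claim A: u 1 has no H-neighbor among the y's
  have hbY : ∀ k, ¬ H.Adj (u 1) (y k) := by
    intro k h
    rcases (hiff _ _).1 (hGux 0) with ⟨-, h' | ⟨w, hw1, hw2⟩⟩
    · exact hnxy 0 k (hcn h' h (hxy 0 k))
    · rcases hNbmem w (hHG hw1) with ⟨i, hi, rfl⟩ | ⟨j', rfl⟩ | ⟨k', rfl⟩
      · rcases hcases i hi with h0 | h2 | h3
        · rw [hfx h0 0 hv0] at hw1
          exact hyna k (hcn hw1 h (huy 0 k))
        · rw [hfx h2 2 hv2] at hw2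
          exact hxnc 0 (hHG hw2)
        · exact S1 i h3 (x 0) (hmemx 0) (hHG hw2)
      · exact hnxy j' k (hcn hw1 h (hxy j' k))
      · exact hnxy 0 k' ((hHG hw2).symm)
  have hbX : ∀ j, ¬ H.Adj (u 1) (x j) := by
    intro j h
    rcases (hiff _ _).1 (hGuy 0) with ⟨-, h' | ⟨w, hw1, hw2⟩⟩
    · exact hnxy j 0 (hcn h h' (hxy j 0))
    · rcases hNbmem w (hHG hw1) with ⟨i, hi, rfl⟩ | ⟨j', rfl⟩ | ⟨k', rfl⟩
      · rcases hcases i hi with h0 | h2 | h3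
        · rw [hfx h0 0 hv0] at hw2
          exact hyna 0 (hHG hw2)
        · rw [hfx h2 2 hv2] at hw1
          exact hxnc j (hcn hw1 h (hux 2 j))
        · exact S1 i h3 (y 0) (hmemy 0) (hHG hw2)
      · exact hnxy j' 0 (hHG hw2)
      · exact hnxy j k' (hcn h hw1 (hxy j k'))
  have hNbsub : ∀ v, H.Adj (u 1) v → ∃ i : Fin (r+3), i ≠ 1 ∧ v = u i := by
    intro v h
    rcases hNbmem v (hHG h) with hi | ⟨j, rfl⟩ | ⟨k, rfl⟩
    · exact hi
    · exact absurd h (hbX j)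
    · exact absurd h (hbY k)
  -- Step B
  have haxk : ∀ j, H.Adj (u 1) (u 0) ∧ H.Adj (u 0) (x j) := by
    intro j
    rcases (hiff _ _).1 (hGux j) with ⟨-, h | ⟨w, hw1, hw2⟩⟩
    · exact absurd h (hbX j)
    · obtain ⟨i, hi, rfl⟩ := hNbsub w hw1
      rcases hcases i hi with h0 | h2 | h3
      · rw [hfx h0 0 hv0] at hw1 hw2
        exact ⟨hw1, hw2⟩
      · rw [hfx h2 2 hv2] at hw2
        exact absurd (hHG hw2) (hxnc j)
      · exact absurd (hHG hw2) (S1 i h3 (x j) (hmemx j))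
  have hcyk : ∀ k, H.Adj (u 1) (u 2) ∧ H.Adj (u 2) (y k) := by
    intro k
    rcases (hiff _ _).1 (hGuy k) with ⟨-, h | ⟨w, hw1, hw2⟩⟩
    · exact absurd h (hbY k)
    · obtain ⟨i, hi, rfl⟩ := hNbsub w hw1
      rcases hcases i hi with h0 | h2 | h3
      · rw [hfx h0 0 hv0] at hw2
        exact absurd (hHG hw2) (hyna k)
      · rw [hfx h2 2 hv2] at hw1 hw2
        exact ⟨hw1, hw2⟩
      · exact absurd (hHG hw2) (S1 i h3 (y k) (hmemy k))
  have hab : H.Adj (u 1) (u 0) := (haxk 0).1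
  have hbc : H.Adj (u 1) (u 2) := (hcyk 0).1
  have hax : ∀ j, H.Adj (u 0) (x j) := fun j => (haxk j).2
  have hcy : ∀ k, H.Adj (u 2) (y k) := fun k => (hcyk k).2
  -- forbidden H-edges at u 0 and u 2
  have hnac : ¬ H.Adj (u 0) (u 2) := by
    intro h
    exact hxnc 0 (hcn h (hax 0) (hux 2 0))
  have hnaui : ∀ i : Fin (r+3), 3 ≤ (i:ℕ) → ¬ H.Adj (u 0) (u i) := by
    intro i hi h
    exact S1 i hi (x 0) (hmemx 0) (hcn h (hax 0) (hux i 0))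
  have hncui : ∀ i : Fin (r+3), 3 ≤ (i:ℕ) → ¬ H.Adj (u 2) (u i) := by
    intro i hi h
    exact S1 i hi (y 0) (hmemy 0) (hcn h (hcy 0) (huy i 0))
  -- Step C
  have hbui : ∀ i : Fin (r+3), 3 ≤ (i:ℕ) → H.Adj (u 1) (u i) := by
    intro i hi
    have hGa : G.Adj (u 0) (u i) := hGu 0 i (fun e => by
      have := congrArg Fin.val e; rw [hv0] at this; omega)
    rcases (hiff _ _).1 hGa with ⟨-, h | ⟨w, hw1, hw2⟩⟩
    · exact absurd h (hnaui i hi)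
    · have hwu : w ∈ Set.range u := by
        by_contra hcon
        exact S1 i hi w hcon (hHG hw2).symm
      obtain ⟨i', rfl⟩ := hwu
      by_cases h1 : i' = 1
      · subst h1; exact hw2
      · rcases hcases i' h1 with h0 | h2 | h3
        · rw [hfx h0 0 hv0] at hw1
          exact absurd rfl hw1.ne
        · rw [hfx h2 2 hv2] at hw1
          exact absurd hw1 hnac
        · exact absurd hw1 (hnaui i' h3)
  -- full set of H-neighbors of u 1
  have hNbeq : H.neighborSet (u 1) = u '' {i | i ≠ 1} := by
    ext v
    simp only [SimpleGraph.mem_neighborSet, Set.mem_image, Set.mem_setOf_eq]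
    constructor
    · intro h
      obtain ⟨i, hi, rfl⟩ := hNbsub v h
      exact ⟨i, hi, rfl⟩
    · rintro ⟨i, hi, rfl⟩
      rcases hcases i hi with h0 | h2 | h3
      · rw [hfx h0 0 hv0]; exact hab
      · rw [hfx h2 2 hv2]; exact hbc
      · exact hbui i h3
  have hcard : (H.neighborSet (u 1)).ncard = r + 2 := by
    rw [hNbeq, Set.ncard_image_of_injective _ hu]
    have h1 : (1 : Fin (r+3)) ∉ {i : Fin (r+3) | i ≠ 1} := by simp
    have h2 : insert (1 : Fin (r+3)) {i : Fin (r+3) | i ≠ 1} = Set.univ := by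
      ext i; by_cases h : i = 1 <;> simp [h]
    have h3 := Set.ncard_insert_of_notMem h1 (Set.toFinite _)
    rw [h2, Set.ncard_univ] at h3
    simp only [Nat.card_eq_fintype_card, Fintype.card_fin] at h3
    omega
  -- N_H(u 0) \ {u 1} = range x
  have hNa : H.neighborSet (u 0) \ {u 1} = Set.range x := by
    ext v
    simp only [Set.mem_diff, Set.mem_singleton_iff, SimpleGraph.mem_neighborSet,
      Set.mem_range]
    constructor
    · rintro ⟨hv, hvb⟩
      have hGvb : G.Adj (u 1) v := (hcn hv hab.symm hvb).symm
      rcases hNbmem v hGvb with ⟨i, hi, rfl⟩ | ⟨j, rfl⟩ | ⟨k, rfl⟩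
      · rcases hcases i hi with h0 | h2 | h3
        · rw [hfx h0 0 hv0] at hv
          exact absurd rfl hv.ne
        · rw [hfx h2 2 hv2] at hv
          exact absurd hv hnac
        · exact absurd hv (hnaui i h3)
      · exact ⟨j, rfl⟩
      · exact absurd (hHG hv) (hyna k)
    · rintro ⟨j, rfl⟩
      exact ⟨hax j, (hux 1 j).symm⟩
  have hNc : H.neighborSet (u 2) \ {u 1} = Set.range y := by
    ext v
    simp only [Set.mem_diff, Set.mem_singleton_iff, SimpleGraph.mem_neighborSet,
      Set.mem_range]
    constructor
    · rintro ⟨hv, hvb⟩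
      have hGvb : G.Adj (u 1) v := (hcn hv hbc.symm hvb).symm
      rcases hNbmem v hGvb with ⟨i, hi, rfl⟩ | ⟨j, rfl⟩ | ⟨k, rfl⟩
      · rcases hcases i hi with h0 | h2 | h3
        · rw [hfx h0 0 hv0] at hv
          exact absurd hv.symm hnac
        · rw [hfx h2 2 hv2] at hv
          exact absurd rfl hv.ne
        · exact absurd hv (hncui i h3)
      · exact absurd (hHG hv) (hxnc j)
      · exact ⟨k, rfl⟩
    · rintro ⟨k, rfl⟩
      exact ⟨hcy k, (huy 1 k).symm⟩
  refine ⟨hab.symm, ?_, hax, hcy, hcard, hNa, hNc⟩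
  intro i hi
  rcases Nat.eq_or_lt_of_le hi with h2 | h3
  · rw [hfx h2.symm 2 hv2]
    exact hbc
  · exact hbui i h3
end

section
/- Let G be a connected F-graph with vertices u_1, ..., u_r, x_1, ..., x_p, y_1, ..., y_q (r ≥ 3, p ≥ 1, q ≥ 1) satisfying conditions (i)–(vi) of the definition of an F-graph, and let H be a square root of G. Then the graph obtained from H by deleting all edges u_iu_j with 4 ≤ i < j ≤ r is a square root of G in which u_4, ..., u_r are pendant vertices (if r ≥ 4). -/
open SimpleGraph

variable {V : Type*}

/-- Lemma 4, second part. Here the paper's `u_1, ..., u_r` (`r ≥ 3`) is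
`u : Fin (r+3) → V`, `x_1, ..., x_p` (`p ≥ 1`) is `x : Fin (p+1) → V`, and
`y_1, ..., y_q` (`q ≥ 1`) is `y : Fin (q+1) → V`; all these vertices are distinct.
Deleting from `H` all edges `u_iu_j` with `4 ≤ i < j ≤ r` yields a square root of
`G` in which `u_4, ..., u_r` are pendant vertices. -/
theorem root_of_FGraph_delete_edges {r p q : ℕ}
    (G H : SimpleGraph V) (hG : G.Connected)
    (u : Fin (r + 3) → V) (x : Fin (p + 1) → V) (y : Fin (q + 1) → V)
    (hu : Function.Injective u) (hx : Function.Injective x) (hy : Function.Injective y)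
    (hux : ∀ i j, u i ≠ x j) (huy : ∀ i j, u i ≠ y j) (hxy : ∀ i j, x i ≠ y j)
    (hF : IsFGraph G u x y)
    (hH : IsSquareRoot H G) :
    IsSquareRoot (H.deleteEdges
      {e | ∃ i j : Fin (r + 3), 3 ≤ (i : ℕ) ∧ 3 ≤ (j : ℕ) ∧ i ≠ j ∧ e = s(u i, u j)}) G ∧
    ∀ i : Fin (r + 3), 3 ≤ (i : ℕ) → IsPendant (H.deleteEdges
      {e | ∃ i j : Fin (r + 3), 3 ≤ (i : ℕ) ∧ 3 ≤ (j : ℕ) ∧ i ≠ j ∧ e = s(u i, u j)}) (u i) := by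

  obtain ⟨hclique, hsep, hNb, hNac, hXa, hYc, hxyG⟩ := hF
  have hG2 : squareGraph H = G := hH
  have hGadj : ∀ v w : V, G.Adj v w ↔ (v ≠ w ∧ (H.Adj v w ∨ ∃ t, H.Adj v t ∧ H.Adj t w)) := by
    intro v w; rw [← hG2]; rfl
  have hHG : ∀ {v w : V}, H.Adj v w → G.Adj v w := fun h => (hGadj _ _).2 ⟨h.ne, Or.inl h⟩
  have hv0 : ((0 : Fin (r+3)) : ℕ) = 0 := rfl
  have hv1 : ((1 : Fin (r+3)) : ℕ) = 1 := by
    show 1 % (r+3) = 1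
    exact Nat.mod_eq_of_lt (by omega)
  have hv2 : ((2 : Fin (r+3)) : ℕ) = 2 := by
    show 2 % (r+3) = 2
    exact Nat.mod_eq_of_lt (by omega)
  -- G-neighbors of u i (i ≥ 3) lie in range u
  have hG1 : ∀ i : Fin (r+3), 3 ≤ (i:ℕ) → ∀ w, G.Adj (u i) w → w ∈ Set.range u := by
    intro i hi w hadj
    by_contra hw
    have hr4 : 4 ≤ r + 3 := by have := i.isLt; omega
    obtain ⟨s, hsmem, hsS⟩ := (hsep hr4).1 (u i) ⟨i, hi, rfl⟩ w hw (Walk.cons hadj Walk.nil)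
    simp only [Walk.support_cons, Walk.support_nil, List.mem_cons,
      List.mem_singleton, List.not_mem_nil, or_false] at hsmem
    simp only [Set.mem_insert_iff, Set.mem_singleton_iff] at hsS
    rcases hsmem with rfl | rfl
    · rcases hsS with h | h | h
      · have h0 := congrArg Fin.val (hu h); rw [hv0] at h0; omega
      · have h0 := congrArg Fin.val (hu h); rw [hv1] at h0; omega
      · have h0 := congrArg Fin.val (hu h); rw [hv2] at h0; omega
    · rcases hsS with h | h | h
      · exact hw ⟨0, h.symm⟩
      · exact hw ⟨1, h.symm⟩
      · exact hw ⟨2, h.symm⟩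
  have hGclique : ∀ i j : Fin (r+3), i ≠ j → G.Adj (u i) (u j) :=
    fun i j hij => hclique ⟨i, rfl⟩ ⟨j, rfl⟩ (fun h => hij (hu h))
  have hGbx : ∀ j, G.Adj (u 1) (x j) := by
    intro j
    have : x j ∈ G.neighborSet (u 1) := by
      rw [hNb]; exact Or.inl (Or.inr ⟨j, rfl⟩)
    exact this
  have hGby : ∀ k, G.Adj (u 1) (y k) := by
    intro k
    have : y k ∈ G.neighborSet (u 1) := by
      rw [hNb]; exact Or.inr ⟨k, rfl⟩
    exact this
  have hGax : ∀ j, G.Adj (u 0) (x j) := fun j => hXa ⟨j, rfl⟩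
  have hGcy : ∀ k, G.Adj (u 2) (y k) := fun k => hYc ⟨k, rfl⟩
  have hNotCx : ∀ j, ¬ G.Adj (u 2) (x j) := by
    intro j h
    have : x j ∈ G.neighborSet (u 0) ∩ G.neighborSet (u 2) := ⟨hGax j, h⟩
    rw [hNac] at this
    obtain ⟨k, -, hk⟩ := this
    exact hux k j hk
  have hNotAy : ∀ k, ¬ G.Adj (u 0) (y k) := by
    intro k h
    have : y k ∈ G.neighborSet (u 0) ∩ G.neighborSet (u 2) := ⟨h, hGcy k⟩
    rw [hNac] at this
    obtain ⟨k', -, hk⟩ := this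
    exact huy k' k hk
  have hNbMem : ∀ w, G.Adj (u 1) w →
      (∃ k : Fin (r+3), k ≠ 1 ∧ u k = w) ∨ (∃ j, x j = w) ∨ (∃ k, y k = w) := by
    intro w h
    have hmem : w ∈ G.neighborSet (u 1) := h
    rw [hNb] at hmem
    rcases hmem with (h' | h') | h'
    · obtain ⟨k, hk, hkw⟩ := h'
      exact Or.inl ⟨k, hk, hkw⟩
    · exact Or.inr (Or.inl h')
    · exact Or.inr (Or.inr h')
  have hGix : ∀ i : Fin (r+3), 3 ≤ (i:ℕ) → ∀ j, ¬ G.Adj (u i) (x j) := by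
    intro i hi j h
    obtain ⟨k, hk⟩ := hG1 i hi _ h
    exact hux k j hk
  have hGiy : ∀ i : Fin (r+3), 3 ≤ (i:ℕ) → ∀ k, ¬ G.Adj (u i) (y k) := by
    intro i hi k h
    obtain ⟨k', hk⟩ := hG1 i hi _ h
    exact huy k' k hk
  -- Step 2: for i ≥ 3, u i is not H-adjacent to u 0 nor to u 2
  have hNoA : ∀ i : Fin (r+3), 3 ≤ (i:ℕ) → ¬ H.Adj (u i) (u 0) := by
    intro i hi hda
    have hax : ¬ H.Adj (u 0) (x 0) := fun h =>
      hGix i hi 0 ((hGadj _ _).2 ⟨hux i 0, Or.inr ⟨u 0, hda, h⟩⟩)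
    obtain ⟨-, hcase⟩ := (hGadj _ _).1 (hGax 0)
    rcases hcase with h | ⟨w, haw, hwx⟩
    · exact hax h
    have hwd : w ≠ u i := by rintro rfl; exact hGix i hi 0 (hHG hwx)
    have hGdw : G.Adj (u i) w := (hGadj _ _).2 ⟨Ne.symm hwd, Or.inr ⟨u 0, hda, haw⟩⟩
    obtain ⟨k, rfl⟩ := hG1 i hi w hGdw
    have hGkx : G.Adj (u k) (x 0) := hHG hwx
    have hk3 : ¬ 3 ≤ (k:ℕ) := fun h => hGix k h 0 hGkx
    have hk0 : k ≠ 0 := by rintro rfl; exact haw.ne rfl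
    have hk2 : k ≠ 2 := by rintro rfl; exact hNotCx 0 hGkx
    have hkval : (k:ℕ) = 1 := by
      rcases (by omega : (k:ℕ) = 0 ∨ (k:ℕ) = 1 ∨ (k:ℕ) = 2) with h | h | h
      · exact absurd (Fin.ext (by rw [h, hv0]) : k = 0) hk0
      · exact h
      · exact absurd (Fin.ext (by rw [h, hv2]) : k = 2) hk2
    have hk1 : k = 1 := Fin.ext (by rw [hkval, hv1])
    subst hk1
    -- haw : H.Adj (u 0) (u 1), hwx : H.Adj (u 1) (x 0)
    have hby : ¬ H.Adj (u 1) (y 0) := fun h =>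
      hxyG 0 0 ((hGadj _ _).2 ⟨hxy 0 0, Or.inr ⟨u 1, hwx.symm, h⟩⟩)
    obtain ⟨-, hcase2⟩ := (hGadj _ _).1 (hGby 0)
    rcases hcase2 with h | ⟨w', hbw', hw'y⟩
    · exact hby h
    have hw'x0 : w' ≠ x 0 := by rintro rfl; exact hxyG 0 0 (hHG hw'y)
    have hGxw' : G.Adj (x 0) w' :=
      (hGadj _ _).2 ⟨fun h => hw'x0 h.symm, Or.inr ⟨u 1, hwx.symm, hbw'⟩⟩
    rcases hNbMem w' (hHG hbw') with ⟨k', hk'1, rfl⟩ | ⟨j, rfl⟩ | ⟨k2, rfl⟩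
    · by_cases hk'3 : 3 ≤ (k':ℕ)
      · exact hGiy k' hk'3 0 (hHG hw'y)
      · have hk'0 : k' ≠ 0 := by rintro rfl; exact hNotAy 0 (hHG hw'y)
        have hk'2 : k' ≠ 2 := by rintro rfl; exact hNotCx 0 hGxw'.symm
        rcases (by omega : (k':ℕ) = 0 ∨ (k':ℕ) = 1 ∨ (k':ℕ) = 2) with h | h | h
        · exact hk'0 (Fin.ext (by rw [h, hv0]))
        · exact hk'1 (Fin.ext (by rw [h, hv1]))
        · exact hk'2 (Fin.ext (by rw [h, hv2]))
    · exact hxyG j 0 (hHG hw'y)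
    · exact hxyG 0 k2 hGxw'
  have hNoC : ∀ i : Fin (r+3), 3 ≤ (i:ℕ) → ¬ H.Adj (u i) (u 2) := by
    intro i hi hdc
    have hcy : ¬ H.Adj (u 2) (y 0) := fun h =>
      hGiy i hi 0 ((hGadj _ _).2 ⟨huy i 0, Or.inr ⟨u 2, hdc, h⟩⟩)
    obtain ⟨-, hcase⟩ := (hGadj _ _).1 (hGcy 0)
    rcases hcase with h | ⟨w, hcw, hwy⟩
    · exact hcy h
    have hwd : w ≠ u i := by rintro rfl; exact hGiy i hi 0 (hHG hwy)
    have hGdw : G.Adj (u i) w := (hGadj _ _).2 ⟨Ne.symm hwd, Or.inr ⟨u 2, hdc, hcw⟩⟩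
    obtain ⟨k, rfl⟩ := hG1 i hi w hGdw
    have hGky : G.Adj (u k) (y 0) := hHG hwy
    have hk3 : ¬ 3 ≤ (k:ℕ) := fun h => hGiy k h 0 hGky
    have hk2 : k ≠ 2 := by rintro rfl; exact hcw.ne rfl
    have hk0 : k ≠ 0 := by rintro rfl; exact hNotAy 0 hGky
    have hk1 : k = 1 := by
      rcases (by omega : (k:ℕ) = 0 ∨ (k:ℕ) = 1 ∨ (k:ℕ) = 2) with h | h | h
      · exact absurd (Fin.ext (by rw [h, hv0]) : k = 0) hk0
      · exact Fin.ext (by rw [h, hv1])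
      · exact absurd (Fin.ext (by rw [h, hv2]) : k = 2) hk2
    subst hk1
    -- hcw : H.Adj (u 2) (u 1), hwy : H.Adj (u 1) (y 0)
    have hbx2 : ¬ H.Adj (u 1) (x 0) := fun h =>
      hxyG 0 0 ((hGadj _ _).2 ⟨hxy 0 0, Or.inr ⟨u 1, h.symm, hwy⟩⟩)
    obtain ⟨-, hcase2⟩ := (hGadj _ _).1 (hGbx 0)
    rcases hcase2 with h | ⟨w', hbw', hw'x⟩
    · exact hbx2 h
    have hw'y0 : w' ≠ y 0 := by rintro rfl; exact hxyG 0 0 (hHG hw'x).symm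
    have hGyw' : G.Adj (y 0) w' :=
      (hGadj _ _).2 ⟨fun h => hw'y0 h.symm, Or.inr ⟨u 1, hwy.symm, hbw'⟩⟩
    rcases hNbMem w' (hHG hbw') with ⟨k', hk'1, rfl⟩ | ⟨j, rfl⟩ | ⟨k2, rfl⟩
    · by_cases hk'3 : 3 ≤ (k':ℕ)
      · exact hGix k' hk'3 0 (hHG hw'x)
      · have hk'0 : k' ≠ 0 := by rintro rfl; exact hNotAy 0 hGyw'.symm
        have hk'2 : k' ≠ 2 := by rintro rfl; exact hNotCx 0 (hHG hw'x)
        rcases (by omega : (k':ℕ) = 0 ∨ (k':ℕ) = 1 ∨ (k':ℕ) = 2) with h | h | h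
        · exact hk'0 (Fin.ext (by rw [h, hv0]))
        · exact hk'1 (Fin.ext (by rw [h, hv1]))
        · exact hk'2 (Fin.ext (by rw [h, hv2]))
    · exact hxyG j 0 hGyw'.symm
    · exact hxyG 0 k2 (hHG hw'x).symm
  -- H-neighbors of u i (i ≥ 3)
  have hNHi : ∀ i : Fin (r+3), 3 ≤ (i:ℕ) → ∀ w, H.Adj (u i) w →
      w = u 1 ∨ ∃ j : Fin (r+3), 3 ≤ (j:ℕ) ∧ w = u j := by
    intro i hi w h
    obtain ⟨k, rfl⟩ := hG1 i hi w (hHG h)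
    by_cases hk3 : 3 ≤ (k:ℕ)
    · exact Or.inr ⟨k, hk3, rfl⟩
    · rcases (by omega : (k:ℕ) = 0 ∨ (k:ℕ) = 1 ∨ (k:ℕ) = 2) with hkv | hkv | hkv
      · exact absurd ((Fin.ext (by rw [hkv, hv0]) : k = 0) ▸ h) (hNoA i hi)
      · exact Or.inl (congrArg u (Fin.ext (by rw [hkv, hv1])))
      · exact absurd ((Fin.ext (by rw [hkv, hv2]) : k = 2) ▸ h) (hNoC i hi)
  -- Step 3: u i adjacent to u 1 in H for i ≥ 3
  have hib : ∀ i : Fin (r+3), 3 ≤ (i:ℕ) → H.Adj (u i) (u 1) := by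
    intro i hi
    have hi0 : i ≠ 0 := by
      intro h; rw [h, hv0] at hi; omega
    obtain ⟨-, hcase⟩ := (hGadj _ _).1 (hGclique i 0 hi0)
    rcases hcase with h | ⟨w, hiw, hwa⟩
    · exact absurd h (hNoA i hi)
    rcases hNHi i hi w hiw with rfl | ⟨j, hj, rfl⟩
    · exact hiw
    · exact absurd hwa (hNoA j hj)
  set D : Set (Sym2 V) :=
    {e | ∃ i j : Fin (r + 3), 3 ≤ (i : ℕ) ∧ 3 ≤ (j : ℕ) ∧ i ≠ j ∧ e = s(u i, u j)} with hDdef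
  have hD' : ∀ v w : V, (H.deleteEdges D).Adj v w ↔ (H.Adj v w ∧ s(v,w) ∉ D) :=
    fun v w => SimpleGraph.deleteEdges_adj
  have hnotD1 : ∀ i : Fin (r+3), s(u i, u 1) ∉ D := by
    rintro i ⟨k, l, hk, hl, -, he⟩
    rw [Sym2.eq_iff] at he
    rcases he with ⟨-, h⟩ | ⟨-, h⟩
    · have h0 := congrArg Fin.val (hu h); rw [hv1] at h0; omega
    · have h0 := congrArg Fin.val (hu h); rw [hv1] at h0; omega
  have hnotD1' : ∀ i : Fin (r+3), s(u 1, u i) ∉ D := by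
    intro i h
    rw [Sym2.eq_swap] at h
    exact hnotD1 i h
  constructor
  · show squareGraph (H.deleteEdges D) = G
    ext v w
    constructor
    · rintro ⟨hne, h | ⟨t, h1, h2⟩⟩
      · exact hHG ((hD' _ _).1 h).1
      · exact (hGadj _ _).2 ⟨hne, Or.inr ⟨t, ((hD' _ _).1 h1).1, ((hD' _ _).1 h2).1⟩⟩
    · intro hGvw
      obtain ⟨hne, hcase⟩ := (hGadj v w).1 hGvw
      refine ⟨hne, ?_⟩
      rcases hcase with hvw | ⟨t, hvt, htw⟩
      · by_cases hd : s(v, w) ∈ D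
        · obtain ⟨i, j, hi, hj, hij, he⟩ := hd
          rw [Sym2.eq_iff] at he
          obtain ⟨i0, j0, hi0, hj0, rfl, rfl⟩ :
              ∃ i0 j0 : Fin (r+3), 3 ≤ (i0:ℕ) ∧ 3 ≤ (j0:ℕ) ∧ v = u i0 ∧ w = u j0 := by
            rcases he with ⟨h1, h2⟩ | ⟨h1, h2⟩
            exacts [⟨i, j, hi, hj, h1, h2⟩, ⟨j, i, hj, hi, h1, h2⟩]
          exact Or.inr ⟨u 1, (hD' _ _).2 ⟨hib i0 hi0, hnotD1 i0⟩,
            (hD' _ _).2 ⟨(hib j0 hj0).symm, hnotD1' j0⟩⟩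
        · exact Or.inl ((hD' _ _).2 ⟨hvw, hd⟩)
      · by_cases hd1 : s(v, t) ∈ D
        · obtain ⟨i, j, hi, hj, hij, he⟩ := hd1
          rw [Sym2.eq_iff] at he
          obtain ⟨i0, j0, hi0, hj0, rfl, rfl⟩ :
              ∃ i0 j0 : Fin (r+3), 3 ≤ (i0:ℕ) ∧ 3 ≤ (j0:ℕ) ∧ v = u i0 ∧ t = u j0 := by
            rcases he with ⟨h1, h2⟩ | ⟨h1, h2⟩
            exacts [⟨i, j, hi, hj, h1, h2⟩, ⟨j, i, hj, hi, h1, h2⟩]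
          rcases hNHi j0 hj0 w htw with rfl | ⟨j1, hj1, rfl⟩
          · exact Or.inl ((hD' _ _).2 ⟨hib i0 hi0, hnotD1 i0⟩)
          · exact Or.inr ⟨u 1, (hD' _ _).2 ⟨hib i0 hi0, hnotD1 i0⟩,
              (hD' _ _).2 ⟨(hib j1 hj1).symm, hnotD1' j1⟩⟩
        · by_cases hd2 : s(t, w) ∈ D
          · obtain ⟨i, j, hi, hj, hij, he⟩ := hd2
            rw [Sym2.eq_iff] at he
            obtain ⟨i0, j0, hi0, hj0, rfl, rfl⟩ :
                ∃ i0 j0 : Fin (r+3), 3 ≤ (i0:ℕ) ∧ 3 ≤ (j0:ℕ) ∧ t = u i0 ∧ w = u j0 := by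
              rcases he with ⟨h1, h2⟩ | ⟨h1, h2⟩
              exacts [⟨i, j, hi, hj, h1, h2⟩, ⟨j, i, hj, hi, h1, h2⟩]
            rcases hNHi i0 hi0 v hvt.symm with rfl | ⟨j1, hj1, rfl⟩
            · exact Or.inl ((hD' _ _).2 ⟨(hib j0 hj0).symm, hnotD1' j0⟩)
            · exact Or.inr ⟨u 1, (hD' _ _).2 ⟨hib j1 hj1, hnotD1 j1⟩,
                (hD' _ _).2 ⟨(hib j0 hj0).symm, hnotD1' j0⟩⟩
          · exact Or.inr ⟨t, (hD' _ _).2 ⟨hvt, hd1⟩, (hD' _ _).2 ⟨htw, hd2⟩⟩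
  · intro i hi
    refine ⟨u 1, (hD' _ _).2 ⟨hib i hi, hnotD1 i⟩, ?_⟩
    intro w hw
    obtain ⟨hHw, hnD⟩ := (hD' _ _).1 hw
    rcases hNHi i hi w hHw with rfl | ⟨j, hj, rfl⟩
    · rfl
    · exact absurd (⟨i, j, hi, hj, fun h => hHw.ne (congrArg u h), rfl⟩ : s(u i, u j) ∈ D) hnD
end

section
/- Let u and v be true twins in a connected graph G with at least three vertices, and let G' be the graph obtained from G by deleting v. If H' is a square root of G', then the graph H obtained from H' by adding v with N_H(v) = N_{H'}(u) (that is, by adding v as a false twin of u) is a square root of G. -/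
open SimpleGraph

variable {V : Type*}

/-- Lemma 5 i): if `u, v` are true twins in a connected graph `G` with at least
three vertices, `G'` is obtained from `G` by deleting `v`, `H'` is a square root
of `G'`, and `H` is obtained from `H'` by adding `v` as a false twin of `u`,
then `H` is a square root of `G`. -/
theorem true_twin_add_false_twin_root (G : SimpleGraph V) (u v : V) (huv : u ≠ v)
    (hG : G.Connected)
    (h3 : ∃ a b c : V, a ≠ b ∧ a ≠ c ∧ b ≠ c)
    (htw : TrueTwins G u v)
    (H' : SimpleGraph {w : V // w ≠ v})
    (hroot : IsSquareRoot H' (G.induce {w : V | w ≠ v}))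
    (H : SimpleGraph V)
    (hH₁ : ∀ a b : {w : V // w ≠ v}, H.Adj a b ↔ H'.Adj a b)
    (hH₂ : ∀ a : {w : V // w ≠ v}, H.Adj v a ↔ H'.Adj ⟨u, huv⟩ a) :
    IsSquareRoot H G := by
  classical
  have hmem : ∀ w, w ∈ closedNbhd G u ↔ w ∈ closedNbhd G v := fun w => by rw [htw]
  have hGuv : G.Adj u v := by
    have h := (hmem v).mpr (Set.mem_insert v _)
    rcases h with h | h
    · exact absurd h.symm huv
    · exact h
  have htwin : ∀ w, w ≠ u → w ≠ v → (G.Adj u w ↔ G.Adj v w) := by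
    intro w hwu hwv
    have h := hmem w
    simp only [closedNbhd, Set.mem_insert_iff, SimpleGraph.mem_neighborSet, hwu, hwv,
      false_or] at h
    exact h
  -- the key equivalence coming from `hroot`
  have key : ∀ a b : {w : V // w ≠ v},
      (a ≠ b ∧ (H'.Adj a b ∨ ∃ w, H'.Adj a w ∧ H'.Adj w b)) ↔ G.Adj (a : V) b := by
    intro a b
    have h : (squareGraph H').Adj a b ↔ (G.induce {w : V | w ≠ v}).Adj a b := by rw [hroot]
    simpa [squareGraph] using h
  have coe_ne : ∀ a b : {w : V // w ≠ v}, (a ≠ b) ↔ ((a : V) ≠ (b : V)) := by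
    intro a b; simp [Subtype.ext_iff]
  -- u has a neighbor in H'
  have huNb : ∃ w : {w : V // w ≠ v}, H'.Adj ⟨u, huv⟩ w := by
    have hexC : ∃ c, c ≠ u ∧ c ≠ v := by
      by_contra hcon
      push_neg at hcon
      obtain ⟨a, b, c, hab, hac, hbc⟩ := h3
      have pa : a = u ∨ a = v := or_iff_not_imp_left.mpr (hcon a)
      have pb : b = u ∨ b = v := or_iff_not_imp_left.mpr (hcon b)
      have pc : c = u ∨ c = v := or_iff_not_imp_left.mpr (hcon c)
      rcases pa with ha | ha <;> rcases pb with hb | hb <;> rcases pc with hc | hc <;>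
        first
          | exact hab (ha.trans hb.symm)
          | exact hac (ha.trans hc.symm)
          | exact hbc (hb.trans hc.symm)
    have hGNb : ∃ w, w ≠ v ∧ G.Adj u w := by
      by_contra hcon
      push_neg at hcon
      obtain ⟨c, hcu, hcv⟩ := hexC
      have hclosed : ∀ x ∈ ({u, v} : Set V), ∀ y, G.Adj x y → y ∈ ({u, v} : Set V) := by
        intro x hx y hxy
        rcases hx with hx | hx
        · rw [hx] at hxy
          by_cases hyv : y = v
          · exact Or.inr hyv
          · exact absurd hxy (hcon y hyv)
        · rw [hx] at hxy
          by_cases hyu : y = u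
          · exact Or.inl hyu
          · by_cases hyv : y = v
            · exact absurd (hyv ▸ hxy) (G.irrefl)
            · exact absurd ((htwin y hyu hyv).mpr hxy) (hcon y hyv)
      have hwalk : ∀ {x y : V} (p : G.Walk x y), x ∈ ({u, v} : Set V) → y ∈ ({u, v} : Set V) := by
        intro x y p
        induction p with
        | nil => exact id
        | cons h p ih => intro hx; exact ih (hclosed _ hx _ h)
      obtain ⟨p⟩ := hG.preconnected u c
      rcases hwalk p (Or.inl rfl) with h | h
      · exact hcu h
      · exact hcv h
    obtain ⟨w, hwv, hAdj⟩ := hGNb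
    have h := (key ⟨u, huv⟩ ⟨w, hwv⟩).mpr hAdj
    rcases h.2 with h | ⟨x, h1, h2⟩
    · exact ⟨_, h⟩
    · exact ⟨_, h1⟩
  -- the main claim for the row of v
  have hvrow : ∀ b : V, b ≠ v → ((squareGraph H).Adj v b ↔ G.Adj v b) := by
    intro b hb
    by_cases hbu : b = u
    · rw [hbu]
      constructor
      · intro _; exact hGuv.symm
      · intro _
        obtain ⟨w, hw⟩ := huNb
        show v ≠ u ∧ _
        refine ⟨fun h => huv h.symm, Or.inr ⟨w, (hH₂ w).mpr hw, ?_⟩⟩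
        exact (hH₁ w ⟨u, huv⟩).mpr hw.symm
    · -- b ≠ u, b ≠ v
      have hGb : G.Adj v b ↔ G.Adj u b := (htwin b hbu hb).symm
      have hkey := key ⟨u, huv⟩ ⟨b, hb⟩
      constructor
      · rintro ⟨hne, hc | ⟨w, h1, h2⟩⟩
        · refine hGb.mpr (hkey.mp ⟨?_, Or.inl ((hH₂ ⟨b, hb⟩).mp hc)⟩)
          exact fun h => hbu (congrArg Subtype.val h).symm
        · have hwv : w ≠ v := by rintro rfl; exact H.irrefl h1
          refine hGb.mpr (hkey.mp ⟨fun h => hbu (congrArg Subtype.val h).symm,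
            Or.inr ⟨⟨w, hwv⟩, (hH₂ ⟨w, hwv⟩).mp h1, (hH₁ ⟨w, hwv⟩ ⟨b, hb⟩).mp h2⟩⟩)
      · intro hadj
        have h := hkey.mpr (hGb.mp hadj)
        refine ⟨fun h' => hb h'.symm, ?_⟩
        rcases h.2 with hc | ⟨w, h1, h2⟩
        · exact Or.inl ((hH₂ ⟨b, hb⟩).mpr hc)
        · exact Or.inr ⟨w, (hH₂ w).mpr h1, (hH₁ w ⟨b, hb⟩).mpr h2⟩
  ext a b
  show (a ≠ b ∧ (H.Adj a b ∨ ∃ w, H.Adj a w ∧ H.Adj w b)) ↔ G.Adj a b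
  by_cases hav : a = v
  · rw [hav]
    by_cases hbv : b = v
    · rw [hbv]
      simp
    · exact hvrow b hbv
  · by_cases hbv : b = v
    · rw [hbv]
      have h := hvrow a hav
      constructor
      · rintro ⟨hne, hc | ⟨w, h1, h2⟩⟩
        · exact ((h.mp ⟨hne.symm, Or.inl hc.symm⟩)).symm
        · exact ((h.mp ⟨hne.symm, Or.inr ⟨w, h2.symm, h1.symm⟩⟩)).symm
      · intro hadj
        have h2 := h.mpr hadj.symm
        rcases h2.2 with hc | ⟨w, h1', h2'⟩
        · exact ⟨h2.1.symm, Or.inl hc.symm⟩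
        · exact ⟨h2.1.symm, Or.inr ⟨w, h2'.symm, h1'.symm⟩⟩
    · -- both a, b ≠ v
      have hkey := key ⟨a, hav⟩ ⟨b, hbv⟩
      constructor
      · rintro ⟨hne, hc | ⟨w, h1, h2⟩⟩
        · exact hkey.mp ⟨fun h => hne (congrArg Subtype.val h),
            Or.inl ((hH₁ ⟨a, hav⟩ ⟨b, hbv⟩).mp hc)⟩
        · by_cases hwv : w = v
          · subst hwv
            exact hkey.mp ⟨fun h => hne (congrArg Subtype.val h),
              Or.inr ⟨⟨u, huv⟩, ((hH₂ ⟨a, hav⟩).mp h1.symm).symm, (hH₂ ⟨b, hbv⟩).mp h2⟩⟩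
          · exact hkey.mp ⟨fun h => hne (congrArg Subtype.val h),
              Or.inr ⟨⟨w, hwv⟩, (hH₁ ⟨a, hav⟩ ⟨w, hwv⟩).mp h1, (hH₁ ⟨w, hwv⟩ ⟨b, hbv⟩).mp h2⟩⟩
      · intro hadj
        have h := hkey.mpr hadj
        have hne : a ≠ b := fun he => h.1 (Subtype.ext he)
        rcases h.2 with hc | ⟨w, h1, h2⟩
        · exact ⟨hne, Or.inl ((hH₁ ⟨a, hav⟩ ⟨b, hbv⟩).mpr hc)⟩
        · exact ⟨hne, Or.inr ⟨w, (hH₁ ⟨a, hav⟩ w).mpr h1, (hH₁ w ⟨b, hbv⟩).mpr h2⟩⟩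
end

section
/- Let H be a spanning subgraph of a graph G (same vertex set, E_H ⊆ E_G). Then H is a square root of G if and only if E_H is an independent set of the auxiliary graph P(G) and every two vertices that are adjacent in G are at distance at most 2 in H. -/
open SimpleGraph

variable {V : Type*}

/-- The auxiliary graph `P(G)`: its vertices are the edges of `G`, and two
vertices `e₁`, `e₂` are adjacent iff `e₁ = xy` and `e₂ = yz` for three distinct
vertices `x, y, z` with `xz ∉ E_G`. -/
def auxGraph (G : SimpleGraph V) : SimpleGraph G.edgeSet where
  Adj e₁ e₂ := ∃ a b c : V, a ≠ b ∧ b ≠ c ∧ a ≠ c ∧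
    (e₁ : Sym2 V) = s(a, b) ∧ (e₂ : Sym2 V) = s(b, c) ∧ ¬ G.Adj a c
  symm := by
    constructor
    rintro e₁ e₂ ⟨a, b, c, hab, hbc, hac, h1, h2, hnadj⟩
    refine ⟨c, b, a, hbc.symm, hab.symm, hac.symm, ?_, ?_, fun h => hnadj h.symm⟩
    · rw [h2]; exact Sym2.eq_swap
    · rw [h1]; exact Sym2.eq_swap
  loopless := by
    constructor
    rintro e ⟨a, b, c, hab, hbc, hac, h1, h2, -⟩
    rw [h1, Sym2.eq_iff] at h2
    rcases h2 with ⟨h, -⟩ | ⟨h, -⟩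
    · exact hab h
    · exact hac h

/-- A set of vertices is independent if its elements are pairwise non-adjacent. -/
def IsIndepSetIn {W : Type*} (G : SimpleGraph W) (s : Set W) : Prop :=
  s.Pairwise fun a b => ¬ G.Adj a b

/-- Lemma 6: a spanning subgraph `H` of `G` is a square root of `G` iff the edge
set of `H` is an independent set of the auxiliary graph `P(G)` and every two
vertices adjacent in `G` are at distance at most 2 in `H`. -/
theorem squareRoot_iff_indepSet_and_dist_le_two (G H : SimpleGraph V) (hsub : H ≤ G) :
    IsSquareRoot H G ↔
      (IsIndepSetIn (auxGraph G) {e : G.edgeSet | (e : Sym2 V) ∈ H.edgeSet} ∧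
       ∀ a b : V, G.Adj a b → (H.Adj a b ∨ ∃ w, H.Adj a w ∧ H.Adj w b)) := by
  constructor
  · intro h
    subst h
    constructor
    · rintro e₁ he₁ e₂ he₂ hne ⟨a, b, c, hab, hbc, hac, h1, h2, hnadj⟩
      apply hnadj
      rw [Set.mem_setOf_eq, h1, SimpleGraph.mem_edgeSet] at he₁
      rw [Set.mem_setOf_eq, h2, SimpleGraph.mem_edgeSet] at he₂
      exact ⟨hac, Or.inr ⟨b, he₁, he₂⟩⟩
    · rintro a b ⟨-, h⟩
      exact h
  · rintro ⟨hind, hdist⟩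
    ext a b
    constructor
    · rintro ⟨hne, h | ⟨w, h1, h2⟩⟩
      · exact hsub h
      · by_contra hG
        have e1 : s(a, w) ∈ G.edgeSet := (G.mem_edgeSet).mpr (hsub h1)
        have e2 : s(w, b) ∈ G.edgeSet := (G.mem_edgeSet).mpr (hsub h2)
        have hne' : (⟨s(a, w), e1⟩ : G.edgeSet) ≠ ⟨s(w, b), e2⟩ := by
          intro hEq
          have : s(a, w) = s(w, b) := congrArg Subtype.val hEq
          rw [Sym2.eq_iff] at this
          rcases this with ⟨h1', h2'⟩ | ⟨h1', h2'⟩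
          · exact h1.ne h1'
          · exact hne h1'
        exact hind (Set.mem_setOf_eq ▸ (H.mem_edgeSet).mpr h1)
          (Set.mem_setOf_eq ▸ (H.mem_edgeSet).mpr h2) hne'
          ⟨a, w, b, h1.ne, h2.ne, hne, rfl, rfl, hG⟩
    · intro hG
      exact ⟨hG.ne, hdist a b hG⟩
end

section
/- If G is a connected graph on at least three vertices that has a square root, then G is 2-connected, i.e., G has no separator consisting of a single vertex (removing any single vertex leaves G connected). -/
open SimpleGraph

variable {V : Type*}

section aux
variable (H : SimpleGraph V) (v : V)

lemma sq_reach' {a b : V} (ha : a ≠ v) (hb : b ≠ v)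
    (h : a = b ∨ (squareGraph H).Adj a b) :
    ((squareGraph H).induce {w : V | w ≠ v}).Reachable ⟨a, ha⟩ ⟨b, hb⟩ := by
  rcases h with rfl | h
  · rfl
  · exact SimpleGraph.Adj.reachable h

lemma sq_adj_of_nbrs {x y : V} (hx : H.Adj x v) (hy : H.Adj v y) :
    x = y ∨ (squareGraph H).Adj x y := by
  by_cases hxy : x = y
  · exact Or.inl hxy
  · exact Or.inr ⟨hxy, Or.inr ⟨v, hx, hy⟩⟩

lemma sq_key {a d : V} (ha : a ≠ v) (hd : d ≠ v)
    (hav : (squareGraph H).Adj a v) (hvd : (squareGraph H).Adj v d) :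
    ((squareGraph H).induce {w : V | w ≠ v}).Reachable ⟨a, ha⟩ ⟨d, hd⟩ := by
  obtain ⟨-, h1 | ⟨w, haw, hwv⟩⟩ := hav <;>
    obtain ⟨-, h2 | ⟨w', hvw', hw'd⟩⟩ := hvd
  · exact sq_reach' H v ha hd (sq_adj_of_nbrs H v h1 h2)
  · have hw' : w' ≠ v := (H.adj_comm v w').mp hvw' |>.ne
    exact (sq_reach' H v ha hw' (sq_adj_of_nbrs H v h1 hvw')).trans
      (sq_reach' H v hw' hd (by
        by_cases h : w' = d
        · exact Or.inl h
        · exact Or.inr ⟨h, Or.inl hw'd⟩))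
  · have hw : w ≠ v := hwv.ne
    exact (sq_reach' H v ha hw (by
        by_cases h : a = w
        · exact Or.inl h
        · exact Or.inr ⟨h, Or.inl haw⟩)).trans
      (sq_reach' H v hw hd (sq_adj_of_nbrs H v hwv h2))
  · have hw : w ≠ v := hwv.ne
    have hw' : w' ≠ v := (H.adj_comm v w').mp hvw' |>.ne
    refine (sq_reach' H v ha hw ?_).trans ((sq_reach' H v hw hw'
        (sq_adj_of_nbrs H v hwv hvw')).trans (sq_reach' H v hw' hd ?_))
    · by_cases h : a = w
      · exact Or.inl h
      · exact Or.inr ⟨h, Or.inl haw⟩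
    · by_cases h : w' = d
      · exact Or.inl h
      · exact Or.inr ⟨h, Or.inl hw'd⟩

lemma sq_walk_reach : ∀ (n : ℕ) (a b : V) (ha : a ≠ v) (hb : b ≠ v)
    (p : (squareGraph H).Walk a b), p.length ≤ n →
    ((squareGraph H).induce {w : V | w ≠ v}).Reachable ⟨a, ha⟩ ⟨b, hb⟩ := by
  intro n
  induction n with
  | zero =>
    intro a b ha hb p hlen
    cases p with
    | nil => rfl
    | cons h q => simp [Walk.length_cons] at hlen
  | succ n ih =>
    intro a b ha hb p hlen
    cases p with
    | nil => rfl
    | @cons _ c _ h q =>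
      by_cases hc : c = v
      · cases q with
        | nil => exact absurd hc hb
        | @cons _ d _ h' r =>
          have hav : (squareGraph H).Adj a v := hc ▸ h
          have hvd : (squareGraph H).Adj v d := hc ▸ h'
          have hd : d ≠ v := hvd.ne'
          have : r.length ≤ n := by
            simp [Walk.length_cons] at hlen; omega
          exact (sq_key H v ha hd hav hvd).trans (ih d b hd hb r this)
      · have hq : q.length ≤ n := by
          simp [Walk.length_cons] at hlen; omega
        exact (SimpleGraph.Adj.reachable (by exact h :
            ((squareGraph H).induce {w : V | w ≠ v}).Adj ⟨a, ha⟩ ⟨c, hc⟩)).trans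
          (ih c b hc hb q hq)
end aux

/-- A connected graph on at least three vertices that has a square root is
2-connected: deleting any single vertex leaves the graph connected. -/
theorem connected_with_root_is_two_connected (G : SimpleGraph V) (hG : G.Connected)
    (h3 : ∃ a b c : V, a ≠ b ∧ a ≠ c ∧ b ≠ c)
    (hroot : ∃ H : SimpleGraph V, IsSquareRoot H G) :
    ∀ v : V, (G.induce {w : V | w ≠ v}).Connected := by
  intro v
  obtain ⟨H, hH⟩ := hroot
  subst hH
  rw [connected_iff]
  constructor
  · rintro ⟨x, hx⟩ ⟨y, hy⟩
    obtain ⟨p⟩ := hG.preconnected x y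
    exact sq_walk_reach H v p.length x y hx hy p le_rfl
  · obtain ⟨a, b, c, hab, hac, hbc⟩ := h3
    by_cases hav : a = v
    · exact ⟨⟨b, fun h => hab (hav.trans h.symm)⟩⟩
    · exact ⟨⟨a, hav⟩⟩
end
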